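/- arXiv:1910.13549 — 6 statements merged into one kernel-verified Lean document; each statement's English description precedes it below -/
import Mathlib

section
/- Let n ≥ 1 and let e_1, …, e_n be the elementary symmetric polynomials in the variables x_1, …, x_n over ℝ. Let J be the n×n matrix whose (m,i) entry is the partial derivative ∂e_m/∂x_i. Then det(J) equals, up to sign, the Vandermonde polynomial ∏_{1 ≤ i < j ≤ n} (x_i − x_j); in particular, det(J) is a nonzero polynomial. -/
open Finset MvPolynomial

/-- The `m`-th elementary symmetric polynomial of the values `v i` for `i` in the finite set
`s`. -/
noncomputable def esymOn {σ R : Type*} [CommSemiring R] (s : Finset σ) (m : ℕ) (v : σ → R) : R :=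
  ∑ t ∈ Finset.powersetCard m s, ∏ i ∈ t, v i

/-- The Jacobian matrix of the elementary symmetric polynomials `e₁, …, eₙ` in the variables
`x₁, …, xₙ`; its `(m, i)` entry is `∂ e_{m+1} / ∂ x_i`. -/
noncomputable def jac0 (n : ℕ) : Matrix (Fin n) (Fin n) (MvPolynomial (Fin n) ℝ) :=
  Matrix.of fun m i =>
    pderiv i (esymOn Finset.univ (m.1 + 1) (X : Fin n → MvPolynomial (Fin n) ℝ))

lemma pderiv_prod_X {σ : Type*} [DecidableEq σ] (i : σ) (t : Finset σ) :
    pderiv i (∏ j ∈ t, (X j : MvPolynomial σ ℝ)) =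
      if i ∈ t then ∏ j ∈ t.erase i, (X j : MvPolynomial σ ℝ) else 0 := by
  induction t using Finset.induction_on with
  | empty => simp
  | @insert a s ha ih =>
    rw [Finset.prod_insert ha, pderiv_mul, ih]
    by_cases hia : i = a
    · subst hia
      simp [ha, Finset.erase_insert ha]
    · rw [pderiv_X_of_ne (Ne.symm hia)]
      by_cases his : i ∈ s
      · simp [his, hia, Finset.mem_insert, Finset.erase_insert_of_ne (Ne.symm hia),
          Finset.prod_insert (fun h => ha (Finset.mem_of_mem_erase h))]
      · simp [his, hia]

lemma pderiv_esymOn {n : ℕ} (i : Fin n) (m : ℕ) :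
    pderiv i (esymOn Finset.univ (m + 1) (X : Fin n → MvPolynomial (Fin n) ℝ)) =
      esymOn (Finset.univ.erase i) m (X : Fin n → MvPolynomial (Fin n) ℝ) := by
  rw [esymOn, map_sum]
  simp_rw [pderiv_prod_X]
  rw [Finset.sum_ite, Finset.sum_const_zero, add_zero, esymOn]
  refine Finset.sum_nbij' (fun t => t.erase i) (fun u => insert i u) ?_ ?_ ?_ ?_ ?_
  · intro t ht
    simp only [Finset.mem_filter, Finset.mem_powersetCard] at ht
    refine Finset.mem_powersetCard.2 ⟨?_, ?_⟩
    · intro x hx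
      exact Finset.mem_erase.2 ⟨(Finset.mem_erase.1 hx).1, Finset.mem_univ x⟩
    · rw [Finset.card_erase_of_mem ht.2, ht.1.2]; rfl
  · intro u hu
    rw [Finset.mem_powersetCard] at hu
    have hiu : i ∉ u := fun h => (Finset.mem_erase.1 (hu.1 h)).1 rfl
    refine Finset.mem_filter.2 ⟨Finset.mem_powersetCard.2 ⟨Finset.subset_univ _, ?_⟩,
      Finset.mem_insert_self i u⟩
    rw [Finset.card_insert_of_notMem hiu, hu.2]
  · intro t ht
    exact Finset.insert_erase (Finset.mem_filter.1 ht).2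
  · intro u hu
    rw [Finset.mem_powersetCard] at hu
    exact Finset.erase_insert (fun h => (Finset.mem_erase.1 (hu.1 h)).1 rfl)
  · intro t ht; rfl

lemma esymOn_neg {σ R : Type*} [CommRing R] (s : Finset σ) (k : ℕ) (v : σ → R) :
    esymOn s k (fun i => -v i) = (-1) ^ k * esymOn s k v := by
  rw [esymOn, esymOn, Finset.mul_sum]
  refine Finset.sum_congr rfl fun t ht => ?_
  have hc : t.card = k := (Finset.mem_powersetCard.1 ht).2
  calc ∏ i ∈ t, -v i = ∏ i ∈ t, (-1) * v i := by simp
    _ = (-1) ^ k * ∏ i ∈ t, v i := by rw [Finset.prod_mul_distrib, Finset.prod_const, hc]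

lemma prod_sub_eq_sum {σ R : Type*} [CommRing R] [Nontrivial R] (s : Finset σ) (v : σ → R) (x : R) :
    ∏ l ∈ s, (x - v l) =
      ∑ k ∈ Finset.range (s.card + 1),
        (-1) ^ k * esymOn s k v * x ^ (s.card - k) := by
  classical
  set p : Polynomial R := ∏ l ∈ s, (Polynomial.X + Polynomial.C (-v l)) with hp
  have hmon : ∀ l ∈ s, (Polynomial.X + Polynomial.C (-v l)).Monic :=
    fun l _ => Polynomial.monic_X_add_C _
  have hdeg : p.natDegree = s.card := by
    rw [hp, Polynomial.natDegree_prod_of_monic _ _ hmon]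
    have h1 : ∀ l ∈ s, (Polynomial.X + Polynomial.C (-v l)).natDegree = 1 :=
      fun l _ => Polynomial.natDegree_X_add_C _
    rw [Finset.sum_congr rfl h1, Finset.sum_const, smul_eq_mul, mul_one]
  have heval : ∏ l ∈ s, (x - v l) = p.eval x := by
    rw [hp, Polynomial.eval_prod]
    refine Finset.prod_congr rfl fun l _ => by simp [sub_eq_add_neg]
  have hcoeff : ∀ k ≤ s.card, p.coeff k = (-1) ^ (s.card - k) * esymOn s (s.card - k) v := by
    intro k hk
    rw [hp, Finset.prod_X_add_C_coeff s (fun l => -v l) hk]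
    have := esymOn_neg s (s.card - k) v
    rw [esymOn] at this
    exact this
  rw [heval, Polynomial.eval_eq_sum_range, hdeg]
  rw [← Finset.sum_range_reflect (fun k => (-1) ^ k * esymOn s k v * x ^ (s.card - k))]
  refine Finset.sum_congr rfl fun k hk => ?_
  rw [Finset.mem_range, Nat.lt_succ_iff] at hk
  rw [hcoeff k hk]
  have h1 : s.card + 1 - 1 - k = s.card - k := by omega
  have h2 : s.card - (s.card - k) = k := by omega
  rw [h1, h2]

lemma pderiv_esymOn_compl {n : ℕ} (i : Fin n) (m : ℕ) :
    pderiv i (esymOn Finset.univ (m + 1) (X : Fin n → MvPolynomial (Fin n) ℝ)) =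
      esymOn ({i}ᶜ : Finset (Fin n)) m (X : Fin n → MvPolynomial (Fin n) ℝ) := by
  rw [Finset.compl_singleton]
  exact pderiv_esymOn i m

/-- The determinant of the Jacobian of `e₁, …, eₙ` equals, up to sign, the Vandermonde
polynomial `∏_{i < j} (xᵢ - xⱼ)`; in particular it is a nonzero polynomial. -/
theorem stmt0 (n : ℕ) (hn : 1 ≤ n) :
    ((jac0 n).det = ∏ i : Fin n, ∏ j ∈ Finset.Ioi i, (X i - X j) ∨
      (jac0 n).det = -∏ i : Fin n, ∏ j ∈ Finset.Ioi i, (X i - X j)) ∧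
    (jac0 n).det ≠ 0 := by
  set P : MvPolynomial (Fin n) ℝ := ∏ i : Fin n, ∏ j ∈ Finset.Ioi i, (X i - X j) with hP
  set Q : MvPolynomial (Fin n) ℝ := ∏ i : Fin n, ∏ j ∈ Finset.Ioi i, (X j - X i) with hQ
  set W : Matrix (Fin n) (Fin n) (MvPolynomial (Fin n) ℝ) :=
    Matrix.of fun m j => (-1 : MvPolynomial (Fin n) ℝ) ^ (m : ℕ) * X j ^ (n - 1 - (m : ℕ))
    with hW
  -- cardinality of erased universe
  have hcard : ∀ i : Fin n, ({i}ᶜ : Finset (Fin n)).card = n - 1 := fun i => by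
    rw [Finset.card_compl, Finset.card_singleton, Fintype.card_fin]
  -- Step 1 : (jac0 n).transpose * W is diagonal
  have step1 : (jac0 n).transpose * W =
      Matrix.diagonal (fun i => ∏ l ∈ ({i}ᶜ : Finset (Fin n)), (X i - X l)) := by
    refine Matrix.ext fun i j => ?_
    rw [Matrix.mul_apply]
    have hentry : ∀ m : Fin n, (jac0 n).transpose i m * W m j =
        (-1) ^ (m : ℕ) * esymOn (({i}ᶜ : Finset (Fin n))) (m : ℕ) X *
          (X j : MvPolynomial (Fin n) ℝ) ^ (n - 1 - (m : ℕ)) := by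
      intro m
      rw [Matrix.transpose_apply]
      show pderiv i (esymOn Finset.univ (m.1 + 1) X) * _ = _
      rw [pderiv_esymOn_compl i m.1]
      show _ * ((-1 : MvPolynomial (Fin n) ℝ) ^ (m : ℕ) * X j ^ (n - 1 - (m : ℕ))) = _
      ring
    rw [Finset.sum_congr rfl fun m _ => hentry m]
    have hsum : ∑ m : Fin n, (-1) ^ (m : ℕ) * esymOn (({i}ᶜ : Finset (Fin n))) (m : ℕ) X *
        (X j : MvPolynomial (Fin n) ℝ) ^ (n - 1 - (m : ℕ)) =
        ∏ l ∈ ({i}ᶜ : Finset (Fin n)), (X j - X l) := by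
      rw [prod_sub_eq_sum (({i}ᶜ : Finset (Fin n))) X (X j), hcard i]
      have hrange : n - 1 + 1 = n := by omega
      rw [hrange]
      exact Fin.sum_univ_eq_sum_range
        (fun k => (-1) ^ k * esymOn (({i}ᶜ : Finset (Fin n))) k X *
          (X j : MvPolynomial (Fin n) ℝ) ^ (n - 1 - k)) n
    rw [hsum]
    by_cases hij : i = j
    · subst hij
      rw [Matrix.diagonal_apply_eq]
    · rw [Matrix.diagonal_apply_ne _ hij]
      exact Finset.prod_eq_zero (f := fun l => (X j - X l : MvPolynomial (Fin n) ℝ)) (i := j)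
        (Finset.mem_compl.2 fun h => hij (Finset.mem_singleton.1 h).symm) (sub_self _)
  -- Step 2 : product of diagonal = P * Q
  have step2 : ∏ i : Fin n, ∏ l ∈ ({i}ᶜ : Finset (Fin n)), (X i - X l) = P * Q := by
    have key := Finset.prod_prod_Ioi_mul_eq_prod_prod_off_diag
      (fun a b => (X b - X a : MvPolynomial (Fin n) ℝ))
    have key2 : ∏ i : Fin n, ∏ l ∈ ({i}ᶜ : Finset (Fin n)), (X i - X l) =
        ∏ i : Fin n, ∏ j ∈ Finset.Ioi i,
          ((X i - X j) * (X j - X i) : MvPolynomial (Fin n) ℝ) := by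
      convert key.symm using 4 with i _ j
    rw [key2]
    simp_rw [Finset.prod_mul_distrib]
    rfl
  -- Step 3 : det W = c * Q
  obtain ⟨c, hc1, hc2⟩ : ∃ c : MvPolynomial (Fin n) ℝ, (c = 1 ∨ c = -1) ∧ W.det = c * Q := by
    have hWeq : W = Matrix.of fun m j =>
        (fun m : Fin n => (-1 : MvPolynomial (Fin n) ℝ) ^ (m : ℕ)) m *
        ((Matrix.vandermonde X).transpose.submatrix Fin.revPerm id) m j := by
      refine Matrix.ext fun m j => ?_
      simp only [hW, Matrix.of_apply, Matrix.submatrix_apply, Matrix.transpose_apply,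
        Matrix.vandermonde, Fin.revPerm_apply, id, Fin.val_rev]
      congr 2
      omega
    have hdet : W.det = (∏ m : Fin n, (-1 : MvPolynomial (Fin n) ℝ) ^ (m : ℕ)) *
        (((Equiv.Perm.sign (Fin.revPerm : Equiv.Perm (Fin n)) : ℤ) : MvPolynomial (Fin n) ℝ) * Q) := by
      rw [hWeq, Matrix.det_mul_column, Matrix.det_permute, Matrix.det_transpose,
        Matrix.det_vandermonde]

    refine ⟨(∏ m : Fin n, (-1 : MvPolynomial (Fin n) ℝ) ^ (m : ℕ)) *
      ((Equiv.Perm.sign (Fin.revPerm : Equiv.Perm (Fin n)) : ℤ) : MvPolynomial (Fin n) ℝ), ?_, by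
        rw [hdet]; ring⟩
    have h1 : (∏ m : Fin n, (-1 : MvPolynomial (Fin n) ℝ) ^ (m : ℕ)) = 1 ∨
        (∏ m : Fin n, (-1 : MvPolynomial (Fin n) ℝ) ^ (m : ℕ)) = -1 := by
      rw [Finset.prod_pow_eq_pow_sum]
      rcases Nat.even_or_odd (∑ m : Fin n, (m : ℕ)) with h | h
      · exact Or.inl h.neg_one_pow
      · exact Or.inr h.neg_one_pow
    have h2 : ((Equiv.Perm.sign (Fin.revPerm : Equiv.Perm (Fin n)) : ℤ) : MvPolynomial (Fin n) ℝ) = 1 ∨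
        ((Equiv.Perm.sign (Fin.revPerm : Equiv.Perm (Fin n)) : ℤ) : MvPolynomial (Fin n) ℝ) = -1 := by
      rcases Int.units_eq_one_or (Equiv.Perm.sign (Fin.revPerm : Equiv.Perm (Fin n))) with h | h <;>
        rw [h] <;> push_cast <;> [left; right] <;> rfl
    rcases h1 with h1 | h1 <;> rcases h2 with h2 | h2 <;> rw [h1, h2] <;> simp
  -- Step 4 : Q ≠ 0 and P ≠ 0
  have hXne : ∀ i j : Fin n, i ≠ j → (X i - X j : MvPolynomial (Fin n) ℝ) ≠ 0 := by
    intro i j hij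
    exact sub_ne_zero.2 fun h => hij (MvPolynomial.X_injective h)
  have hQne : Q ≠ 0 := by
    rw [hQ]
    refine Finset.prod_ne_zero_iff.2 fun i _ => Finset.prod_ne_zero_iff.2 fun j hj => ?_
    exact hXne j i (fun h => absurd (h ▸ Finset.mem_Ioi.1 hj) (lt_irrefl _))
  have hPne : P ≠ 0 := by
    rw [hP]
    refine Finset.prod_ne_zero_iff.2 fun i _ => Finset.prod_ne_zero_iff.2 fun j hj => ?_
    exact hXne i j (fun h => absurd (h ▸ Finset.mem_Ioi.1 hj) (lt_irrefl _))
  -- Step 5 : combine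
  have hmain : (jac0 n).det * c * Q = P * Q := by
    have h := congrArg Matrix.det step1
    rw [Matrix.det_mul, Matrix.det_transpose, Matrix.det_diagonal, step2, hc2] at h
    calc (jac0 n).det * c * Q = (jac0 n).det * (c * Q) := by ring
      _ = P * Q := h
  have hfin : (jac0 n).det * c = P := mul_right_cancel₀ hQne hmain
  constructor
  · rcases hc1 with h | h
    · left; rw [h, mul_one] at hfin; exact hfin
    · right; rw [h, mul_neg_one] at hfin; rw [← hfin]; ring
  · intro h0
    rw [h0, zero_mul] at hfin
    exact hPne hfin.symm
end

section
/- Let n ≥ 3 and 2 ≤ p ≤ n. In the polynomial ring ℝ[x_1, …, x_n][X], let M be the n×n matrix with M_{i,i} = X + x_i for 1 ≤ i ≤ n, M_{i+1,i} = −x_i for 1 ≤ i ≤ n−1, M_{1,n} = −x_n, and all other entries 0. Then: (i) det(M) = ∏_{i=1}^n (X + x_i) − ∏_{i=1}^n x_i = X^n + ∑_{m=1}^{n−1} e_m X^{n−m}, where e_m is the m-th elementary symmetric polynomial in x_1, …, x_n; and (ii) the determinant of the (n−1)×(n−1) submatrix of M obtained by deleting row 1 and column p equals (−1)^{p−1}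 (x_1 x_2 ⋯ x_{p−1}) · ∏_{j=p+1}^n (X + x_j). -/
open Finset MvPolynomial

/-- The map `Fin (n-1) → Fin n` that skips the index `r` (used to delete row/column `r`). -/
def delIdx (n r : ℕ) (k : Fin (n - 1)) : Fin n :=
  if k.1 < r then ⟨k.1, by have := k.isLt; omega⟩ else ⟨k.1 + 1, by have := k.isLt; omega⟩

/-- The matrix `X•I - A` for the `n`-compartment cycle model with no leaks, written over
`(ℝ[x₁,…,xₙ])[X]`; variable `x i` (0-based `i`) stands for the rate constant `k_{i+2,i+1}`
(indices mod `n`).  Diagonal entries are `X + xᵢ`, the subdiagonal entries are `-xᵢ`, the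
top-right corner is `-xₙ`, and all other entries are `0`. -/
noncomputable def M1 (n : ℕ) :
    Matrix (Fin n) (Fin n) (Polynomial (MvPolynomial (Fin n) ℝ)) :=
  Matrix.of fun i j =>
    if i = j then Polynomial.X + Polynomial.C (X j)
    else if i.1 = j.1 + 1 ∨ (i.1 = 0 ∧ j.1 = n - 1) then -Polynomial.C (X j : MvPolynomial (Fin n) ℝ)
    else 0

lemma M1_det (n : ℕ) (hn : 3 ≤ n) :
    (M1 n).det = ∏ i : Fin n, (Polynomial.X + Polynomial.C (X i)) -
      Polynomial.C (∏ i : Fin n, X i) := by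
  obtain ⟨N, rfl⟩ : ∃ N, n = N + 3 := ⟨n - 3, by omega⟩
  have hsub0 : ((M1 (N+3)).submatrix Fin.succ (Fin.succAbove 0)).det
      = ∏ l : Fin (N+2), (Polynomial.X + Polynomial.C (X l.succ)) := by
    rw [Fin.succAbove_zero, Matrix.det_of_lowerTriangular]
    · exact Finset.prod_congr rfl fun l _ => by simp [M1]
    · intro i j hij
      have hv : (i : ℕ) < (j : ℕ) := hij
      simp only [Matrix.submatrix_apply, M1, Matrix.of_apply, Fin.ext_iff, Fin.val_succ]
      rw [if_neg (by omega), if_neg (by omega)]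
  have hsubl : ((M1 (N+3)).submatrix Fin.succ (Fin.succAbove (Fin.last (N+2)))).det
      = ∏ l : Fin (N+2), -Polynomial.C (X l.castSucc : MvPolynomial (Fin (N+3)) ℝ) := by
    rw [Fin.succAbove_last, Matrix.det_of_upperTriangular]
    · refine Finset.prod_congr rfl fun l _ => ?_
      simp only [Matrix.submatrix_apply, M1, Matrix.of_apply]
      rw [if_neg (by simp [Fin.ext_iff]), if_pos (Or.inl (by simp))]
    · intro i j hij
      have hv : (j : ℕ) < (i : ℕ) := hij
      simp only [Matrix.submatrix_apply, M1, Matrix.of_apply, Fin.ext_iff, Fin.val_succ,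
        Fin.coe_castSucc]
      rw [if_neg (by omega), if_neg (by omega)]
  have hprodneg : (∏ l : Fin (N+2), -Polynomial.C (X (l.castSucc : Fin (N+3)) : MvPolynomial (Fin (N+3)) ℝ)) =
      ((-1 : Polynomial (MvPolynomial (Fin (N+3)) ℝ))^(N+2)) *
        Polynomial.C (∏ l : Fin (N+2), X (l.castSucc : Fin (N+3))) := by
    rw [Finset.prod_congr rfl (fun (l : Fin (N+2)) _ =>
      (by ring : -Polynomial.C (X (l.castSucc : Fin (N+3)) : MvPolynomial (Fin (N+3)) ℝ) =
        (-1) * Polynomial.C (X (l.castSucc : Fin (N+3)))))]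
    rw [Finset.prod_mul_distrib, Finset.prod_const, Finset.card_univ, Fintype.card_fin,
      ← map_prod]
  rw [Matrix.det_succ_row_zero]
  rw [← Finset.sum_subset (Finset.subset_univ ({0, Fin.last (N+2)} : Finset (Fin (N+3))))
      (by
        intro j _ hj
        simp only [Finset.mem_insert, Finset.mem_singleton, not_or] at hj
        have hj0 : (j : ℕ) ≠ 0 := fun h => hj.1 (Fin.ext h)
        have hjl : (j : ℕ) ≠ N + 2 := fun h => hj.2 (Fin.ext (by simpa using h))
        have hz : (M1 (N+3)) 0 j = 0 := by
          simp only [M1, Matrix.of_apply, Fin.ext_iff, Fin.val_zero]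
          rw [if_neg (by omega), if_neg (by omega)]
        rw [hz, mul_zero, zero_mul])]
  rw [Finset.sum_pair (by simp [Fin.ext_iff] : (0 : Fin (N+3)) ≠ Fin.last (N+2))]
  rw [hsub0, hsubl, hprodneg]
  have hM00 : (M1 (N+3)) 0 0 = Polynomial.X + Polynomial.C (X 0) := by simp [M1]
  have hM0l : (M1 (N+3)) 0 (Fin.last (N+2)) = -Polynomial.C (X (Fin.last (N+2)) : MvPolynomial (Fin (N+3)) ℝ) := by
    simp only [M1, Matrix.of_apply]
    rw [if_neg (by simp [Fin.ext_iff]), if_pos (Or.inr ⟨rfl, by simp⟩)]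
  rw [hM00, hM0l, Fin.val_last, Fin.val_zero, pow_zero, one_mul]
  rw [Fin.prod_univ_succ (fun i : Fin (N+3) => Polynomial.X + Polynomial.C (X i))]
  rw [Fin.prod_univ_castSucc (fun i : Fin (N+3) => X i), map_mul]
  have hsq : ((-1 : Polynomial (MvPolynomial (Fin (N+3)) ℝ))^(N+2)) *
      ((-1 : Polynomial (MvPolynomial (Fin (N+3)) ℝ))^(N+2)) = 1 := by
    rw [← pow_add, show N+2+(N+2) = 2*(N+2) by ring, pow_mul]; norm_num
  linear_combination (-(Polynomial.C (X (Fin.last (N+2))) *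
    Polynomial.C (∏ l : Fin (N+2), X (l.castSucc : Fin (N+3))))) * hsq

lemma vieta' (n : ℕ) :
    ∏ i : Fin n, (Polynomial.X + Polynomial.C ((X : Fin n → MvPolynomial (Fin n) ℝ) i)) =
    ∑ j ∈ Finset.range (n+1),
      Polynomial.C (esymOn (Finset.univ : Finset (Fin n)) j
        (X : Fin n → MvPolynomial (Fin n) ℝ)) * Polynomial.X ^ (n - j) := by
  have h := Multiset.prod_X_add_C_eq_sum_esymm
    ((Finset.univ : Finset (Fin n)).val.map (X : Fin n → MvPolynomial (Fin n) ℝ))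
  rw [Multiset.map_map] at h
  have hc : Multiset.card ((Finset.univ : Finset (Fin n)).val.map
      (X : Fin n → MvPolynomial (Fin n) ℝ)) = n := by simp
  rw [hc] at h
  simp only [Finset.esymm_map_val] at h
  rw [Finset.prod_eq_multiset_prod]
  exact h.trans (Finset.sum_congr rfl fun j _ => by rw [esymOn])

def cyf (n p : ℕ) (hpn : p ≤ n) (hn : 3 ≤ n) : Fin (n-1) → Fin (n-1) := fun k =>
  if k.1 < p - 1 then ⟨p - 2 - k.1, by omega⟩ else k

lemma cyf_val (n p : ℕ) (hpn : p ≤ n) (hn : 3 ≤ n) (k : Fin (n-1)) :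
    (cyf n p hpn hn k).1 = if k.1 < p - 1 then p - 2 - k.1 else k.1 := by
  rw [cyf]; split_ifs <;> rfl

lemma cyf_invol (n p : ℕ) (hpn : p ≤ n) (hn : 3 ≤ n) :
    Function.Involutive (cyf n p hpn hn) := by
  intro k
  apply Fin.ext
  rw [cyf_val, cyf_val]
  split_ifs <;> omega

lemma delIdx_zero_val (n : ℕ) (a : Fin (n-1)) : (delIdx n 0 a).1 = a.1 + 1 := by
  rw [delIdx, if_neg (Nat.not_lt_zero _)]

lemma delIdx_val (n r : ℕ) (c : Fin (n-1)) :
    (delIdx n r c).1 = if c.1 < r then c.1 else c.1 + 1 := by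
  rw [delIdx]; split_ifs <;> rfl

lemma M1_minor (n p : ℕ) (hn : 3 ≤ n) (hp : 2 ≤ p) (hpn : p ≤ n) :
    ((M1 n).submatrix (delIdx n 0) (delIdx n (p - 1))).det =
      (-1 : Polynomial (MvPolynomial (Fin n) ℝ)) ^ (p - 1) *
        Polynomial.C (∏ i ∈ Finset.univ.filter (fun i : Fin n => i.1 < p - 1), X i) *
        ∏ j ∈ Finset.univ.filter (fun j : Fin n => p ≤ j.1),
          (Polynomial.X + Polynomial.C (X j)) := by
  classical
  have hzero : ∀ a c : Fin (n-1),
      (delIdx n 0 a).1 ≠ (delIdx n (p-1) c).1 →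
      (delIdx n 0 a).1 ≠ (delIdx n (p-1) c).1 + 1 →
      M1 n (delIdx n 0 a) (delIdx n (p-1) c) = 0 := by
    intro a c h1 h2
    have h0 : (delIdx n 0 a).1 = a.1 + 1 := delIdx_zero_val n a
    simp only [M1, Matrix.of_apply, Fin.ext_iff]
    rw [if_neg h1, if_neg (by omega)]
  set e : Equiv.Perm (Fin (n-1)) := Function.Involutive.toPerm _ (cyf_invol n p hpn hn) with he
  have hev : ∀ k : Fin (n-1), (e k).1 = if k.1 < p - 1 then p - 2 - k.1 else k.1 := by
    intro k
    rw [he, Function.Involutive.coe_toPerm, cyf_val]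
  have htri : ((((M1 n).submatrix (delIdx n 0) (delIdx n (p-1))).submatrix (⇑e) (⇑e)).BlockTriangular
      OrderDual.toDual) := by
    intro i j hij
    have hv : (i : ℕ) < (j : ℕ) := hij
    simp only [Matrix.submatrix_apply]
    apply hzero <;>
      · rw [delIdx_zero_val, delIdx_val, hev i, hev j]
        split_ifs <;> omega
  have hdiag : ∀ k : Fin (n-1), M1 n (delIdx n 0 k) (delIdx n (p-1) k) =
      if k.1 < p - 1 then -Polynomial.C (X (⟨k.1, by omega⟩ : Fin n) : MvPolynomial (Fin n) ℝ)
      else Polynomial.X + Polynomial.C (X (⟨k.1 + 1, by omega⟩ : Fin n)) := by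
    intro k
    by_cases h : k.1 < p - 1
    · rw [if_pos h]
      have hr : delIdx n 0 k = ⟨k.1+1, by omega⟩ := by
        rw [delIdx, if_neg (Nat.not_lt_zero _)]
      have hc : delIdx n (p-1) k = ⟨k.1, by omega⟩ := by rw [delIdx, if_pos h]
      rw [hr, hc]
      simp only [M1, Matrix.of_apply]
      rw [if_neg (by simp [Fin.ext_iff])]
      simp
    · rw [if_neg h]
      have hr : delIdx n 0 k = ⟨k.1+1, by omega⟩ := by
        rw [delIdx, if_neg (Nat.not_lt_zero _)]
      have hc : delIdx n (p-1) k = ⟨k.1+1, by omega⟩ := by rw [delIdx, if_neg h]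
      rw [hr, hc]
      simp [M1]
  have hcard : (Finset.univ.filter (fun k : Fin (n-1) => k.1 < p - 1)).card = p - 1 := by
    have himg : (Finset.univ.filter (fun k : Fin (n-1) => k.1 < p - 1)) =
        Finset.image (fun t : Fin (p-1) => (⟨t.1, by omega⟩ : Fin (n-1))) Finset.univ := by
      ext k
      simp only [Finset.mem_filter, Finset.mem_univ, true_and, Finset.mem_image, Fin.ext_iff]
      constructor
      · intro h; exact ⟨⟨k.1, h⟩, rfl⟩
      · rintro ⟨t, ht⟩
        have := t.2
        omega
    rw [himg, Finset.card_image_of_injective _ (fun x y hxy => by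
        apply Fin.ext
        have := congrArg Fin.val hxy
        simpa using this), Finset.card_univ, Fintype.card_fin]
  rw [← Matrix.det_submatrix_equiv_self e, Matrix.det_of_lowerTriangular _ htri]
  simp only [Matrix.submatrix_apply]
  rw [Equiv.prod_comp e (fun k : Fin (n-1) => M1 n (delIdx n 0 k) (delIdx n (p-1) k))]
  rw [Finset.prod_congr rfl (fun k _ => hdiag k), Finset.prod_ite]
  have h1 : ∏ k ∈ Finset.univ.filter (fun k : Fin (n-1) => k.1 < p - 1),
        -Polynomial.C (X (⟨k.1, by omega⟩ : Fin n) : MvPolynomial (Fin n) ℝ)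
      = (-1 : Polynomial (MvPolynomial (Fin n) ℝ))^(p-1) *
        Polynomial.C (∏ i ∈ Finset.univ.filter (fun i : Fin n => i.1 < p - 1), X i) := by
    rw [Finset.prod_congr rfl (fun (k : Fin (n-1)) _ =>
      (by ring : -Polynomial.C (X (⟨k.1, by omega⟩ : Fin n) : MvPolynomial (Fin n) ℝ) =
        -1 * Polynomial.C (X (⟨k.1, by omega⟩ : Fin n))))]
    rw [Finset.prod_mul_distrib, Finset.prod_const, hcard, ← map_prod]
    congr 1
    congr 1
    apply Finset.prod_nbij' (fun k : Fin (n-1) => (⟨k.1, by omega⟩ : Fin n))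
      (fun t : Fin n => (⟨t.1 % (n-1), Nat.mod_lt _ (by omega)⟩ : Fin (n-1)))
    · intro a ha
      simp only [Finset.mem_filter, Finset.mem_univ, true_and] at *
      exact ha
    · intro t ht
      simp only [Finset.mem_filter, Finset.mem_univ, true_and] at *
      rw [Nat.mod_eq_of_lt (by omega)]
      exact ht
    · intro a _
      exact Fin.ext (Nat.mod_eq_of_lt a.isLt)
    · intro t ht
      simp only [Finset.mem_filter, Finset.mem_univ, true_and] at ht
      exact Fin.ext (Nat.mod_eq_of_lt (by omega))
    · intro a _
      rfl
  have h2 : ∏ k ∈ Finset.univ.filter (fun k : Fin (n-1) => ¬ k.1 < p - 1),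
        (Polynomial.X + Polynomial.C ((X : Fin n → MvPolynomial (Fin n) ℝ)
          (⟨k.1 + 1, by omega⟩ : Fin n)))
      = ∏ j ∈ Finset.univ.filter (fun j : Fin n => p ≤ j.1),
          (Polynomial.X + Polynomial.C ((X : Fin n → MvPolynomial (Fin n) ℝ) j)) := by
    apply Finset.prod_nbij' (fun k : Fin (n-1) => (⟨k.1 + 1, by omega⟩ : Fin n))
      (fun t : Fin n => (⟨t.1 - 1, by omega⟩ : Fin (n-1)))
    · intro a ha
      simp only [Finset.mem_filter, Finset.mem_univ, true_and] at *
      omega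
    · intro t ht
      simp only [Finset.mem_filter, Finset.mem_univ, true_and] at *
      omega
    · intro a _
      exact Fin.ext (show a.1 + 1 - 1 = a.1 by omega)
    · intro t ht
      simp only [Finset.mem_filter, Finset.mem_univ, true_and] at ht
      exact Fin.ext (show t.1 - 1 + 1 = t.1 by omega)
    · intro a _
      rfl
  rw [h1, h2]

/-- Determinant and `(1,p)`-minor of the characteristic-style matrix of the cycle model:
`det M = ∏ (X + xᵢ) - ∏ xᵢ = Xⁿ + ∑_{m=1}^{n-1} eₘ X^{n-m}`, and the determinant of the
submatrix obtained by deleting row `1` and column `p` (1-based) equals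
`(-1)^{p-1} (x₁⋯x_{p-1}) ∏_{j=p+1}^n (X + xⱼ)`. -/
theorem stmt1 (n p : ℕ) (hn : 3 ≤ n) (hp : 2 ≤ p) (hpn : p ≤ n) :
    (M1 n).det =
        ∏ i : Fin n, (Polynomial.X + Polynomial.C (X i)) -
          Polynomial.C (∏ i : Fin n, X i) ∧
    (M1 n).det =
        Polynomial.X ^ n + ∑ m ∈ Finset.Icc 1 (n - 1),
          Polynomial.C (esymOn Finset.univ m (X : Fin n → MvPolynomial (Fin n) ℝ)) *
            Polynomial.X ^ (n - m) ∧
    ((M1 n).submatrix (delIdx n 0) (delIdx n (p - 1))).det =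
      (-1 : Polynomial (MvPolynomial (Fin n) ℝ)) ^ (p - 1) *
        Polynomial.C (∏ i ∈ Finset.univ.filter (fun i : Fin n => i.1 < p - 1), X i) *
        ∏ j ∈ Finset.univ.filter (fun j : Fin n => p ≤ j.1),
          (Polynomial.X + Polynomial.C (X j)) := by
  refine ⟨M1_det n hn, ?_, M1_minor n p hn hp hpn⟩
  rw [M1_det n hn, vieta' n]
  rw [Finset.sum_range_succ]
  rw [show Finset.range n = insert 0 (Finset.Icc 1 (n-1)) from by
    ext k; simp only [Finset.mem_range, Finset.mem_insert, Finset.mem_Icc]; omega]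
  rw [Finset.sum_insert (by simp)]
  have e0 : esymOn (Finset.univ : Finset (Fin n)) 0 (X : Fin n → MvPolynomial (Fin n) ℝ) = 1 := by
    simp [esymOn]
  have hps : Finset.powersetCard n (Finset.univ : Finset (Fin n)) = {Finset.univ} := by
    have := Finset.powersetCard_self (Finset.univ : Finset (Fin n))
    rwa [Finset.card_univ, Fintype.card_fin] at this
  have etop : esymOn (Finset.univ : Finset (Fin n)) n (X : Fin n → MvPolynomial (Fin n) ℝ)
      = ∏ i : Fin n, X i := by
    rw [esymOn, hps, Finset.sum_singleton]
  rw [e0, etop, Nat.sub_self, Nat.sub_zero, pow_zero, mul_one, map_one, one_mul]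
  ring
end

section
/- Let n ≥ 2 and 1 ≤ m ≤ n−1. Then the n polynomials e_1, e_2, …, e_{n−1}, x_1 x_2 ⋯ x_m in ℝ[x_1, …, x_n] are algebraically independent over ℝ, where e_j denotes the j-th elementary symmetric polynomial in x_1, …, x_n. -/
open Finset MvPolynomial

section Aux

variable (N m : ℕ)

private lemma card_filter_lt (hm : m ≤ N + 1) :
    (Finset.univ.filter (fun j : Fin (N + 1) => j.1 < m)).card = m := by
  have : Finset.univ.filter (fun j : Fin (N + 1) => j.1 < m)
      = Finset.map (Fin.castLEEmb hm) Finset.univ := by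
    ext j
    simp only [mem_filter, mem_univ, true_and, Finset.mem_map, Fin.castLEEmb_apply]
    constructor
    · intro hj
      exact ⟨⟨j.1, hj⟩, by ext; simp⟩
    · rintro ⟨i, rfl⟩
      simpa using i.2
  rw [this, Finset.card_map, Finset.card_univ, Fintype.card_fin]

private lemma esymm_top : esymm (Fin (N + 1)) ℝ (N + 1) = ∏ v, X v := by
  rw [esymm]
  have h : powersetCard (N + 1) (Finset.univ : Finset (Fin (N + 1))) = {Finset.univ} := by
    have := Finset.powersetCard_self (Finset.univ : Finset (Fin (N + 1)))
    simpa using this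
  rw [h]
  simp

private lemma prod_rename (hm : m ≤ N + 1) :
    (∏ k : Fin (N + 1), rename (Equiv.addLeft k)
        (∏ j ∈ Finset.univ.filter (fun j : Fin (N + 1) => j.1 < m),
          (X j : MvPolynomial (Fin (N + 1)) ℝ)))
      = esymm (Fin (N + 1)) ℝ (N + 1) ^ m := by
  have h1 : ∀ k : Fin (N + 1), rename (Equiv.addLeft k)
      (∏ j ∈ Finset.univ.filter (fun j : Fin (N + 1) => j.1 < m),
        (X j : MvPolynomial (Fin (N + 1)) ℝ))
      = ∏ j ∈ Finset.univ.filter (fun j : Fin (N + 1) => j.1 < m), X (k + j) := by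
    intro k
    rw [map_prod]
    simp [rename_X]
  simp only [h1]
  rw [Finset.prod_comm]
  have h2 : ∀ j : Fin (N + 1), (∏ k : Fin (N + 1), (X (k + j) : MvPolynomial (Fin (N + 1)) ℝ))
      = ∏ v, X v := by
    intro j
    exact Equiv.prod_comp (Equiv.addRight j) X
  simp only [h2]
  rw [Finset.prod_const, card_filter_lt N m hm, esymm_top]

end Aux

set_option maxHeartbeats 2000000 in
set_option synthInstance.maxHeartbeats 400000 in
theorem stmt3_aux (N m : ℕ) (hm1 : 1 ≤ m) (hm2 : m ≤ N) :
    AlgebraicIndependent ℝ (fun o : Option (Fin N) =>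
      o.elim
        (∏ j ∈ Finset.univ.filter (fun j : Fin (N + 1) => j.1 < m),
          (X j : MvPolynomial (Fin (N + 1)) ℝ))
        (fun i => esymm (Fin (N + 1)) ℝ (i.1 + 1))) := by
  classical
  set R := MvPolynomial (Fin (N + 1)) ℝ with hR
  let K := FractionRing R
  set e : Fin (N + 1) → R := fun i => esymm (Fin (N + 1)) ℝ (i.1 + 1) with he
  set p : R := ∏ j ∈ Finset.univ.filter (fun j : Fin (N + 1) => j.1 < m), X j with hp
  -- algebraic independence of all elementary symmetric polynomials
  have hE : AlgebraicIndependent ℝ e := by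
    rw [algebraicIndependent_iff_injective_aeval]
    have h1 : Function.Injective (esymmAlgHom (Fin (N + 1)) ℝ (N + 1)) :=
      esymmAlgHom_fin_injective ℝ le_rfl
    intro a b hab
    apply h1
    apply Subtype.val_injective
    rw [esymmAlgHom_apply, esymmAlgHom_apply]
    exact hab
  let ι : R →ₐ[ℝ] K := IsScalarTower.toAlgHom ℝ R K
  have hιinj : Function.Injective ι := IsFractionRing.injective R K
  have hy : AlgebraicIndependent ℝ (⇑ι ∘ e) := hE.map' hιinj
  have hy' : AlgebraicIndependent ℝ (fun j : Fin N => ι (e j.castSucc)) := by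
    have := hy.comp Fin.castSucc (Fin.castSucc_injective N)
    exact this
  apply AlgebraicIndependent.of_comp ι
  have hcomp : ⇑ι ∘ (fun o : Option (Fin N) =>
      o.elim p (fun i => e i.castSucc)) = fun o : Option (Fin N) =>
        o.elim (ι p) (fun j => ι (e j.castSucc)) := by
    funext o; cases o <;> rfl
  have hcomp0 : (fun o : Option (Fin N) =>
      o.elim p (fun i : Fin N => esymm (Fin (N + 1)) ℝ (i.1 + 1)))
      = (fun o : Option (Fin N) => o.elim p (fun i => e i.castSucc)) := by
    funext o; cases o <;> rfl
  rw [show (⇑ι ∘ fun o : Option (Fin N) =>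
      o.elim p (fun i : Fin N => esymm (Fin (N + 1)) ℝ (i.1 + 1)))
      = fun o : Option (Fin N) => o.elim (ι p) (fun j => ι (e j.castSucc)) by
    rw [← hcomp, hcomp0]]
  rw [hy'.option_iff_transcendental (ι p)]
  -- the transcendence of e_n over the adjoin of e_1, ..., e_{n-1}
  have hT : Transcendental (Algebra.adjoin ℝ (Set.range fun j : Fin N => ι (e j.castSucc)))
      (ι (e (Fin.last N))) := by
    rw [← hy'.option_iff_transcendental (ι (e (Fin.last N)))]
    have := hy.comp ⇑finSuccEquivLast.symm finSuccEquivLast.symm.injective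
    convert this using 1
    funext o
    cases o with
    | none => simp
    | some j => simp
  intro hq
  apply hT
  -- set up the fraction field of the adjoin
  set E : Subalgebra ℝ K := Algebra.adjoin ℝ (Set.range fun j : Fin N => ι (e j.castSucc))
    with hEdef
  haveI : FaithfulSMul E K :=
    (faithfulSMul_iff_algebraMap_injective E K).mpr Subtype.val_injective
  letI : Algebra (FractionRing ↥E) K := FractionRing.liftAlgebra ↥E K
  haveI : IsScalarTower ↥E (FractionRing ↥E) K := FractionRing.isScalarTower_liftAlgebra ↥E K
  set Ff := FractionRing ↥E with hFf
  rw [IsFractionRing.isAlgebraic_iff ↥E Ff K] at hq ⊢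
  -- the conjugates of p under cyclic permutations are algebraic over Ff
  have halg : ∀ k : Fin (N + 1),
      IsAlgebraic Ff ((algebraMap R K) (rename (Equiv.addLeft k) p)) := by
    intro k
    have hginj : Function.Injective
        ((algebraMap R K).comp (rename (Equiv.addLeft k) : R →ₐ[ℝ] R).toRingHom) :=
      (IsFractionRing.injective R K).comp (rename_injective _ (Equiv.addLeft k).injective)
    set Φ : K →+* K := IsFractionRing.lift hginj with hΦ
    have hΦspec : ∀ r : R, Φ ((algebraMap R K) r)
        = (algebraMap R K) (rename (Equiv.addLeft k) r) := fun r =>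
      IsFractionRing.lift_algebraMap hginj r
    have hfix : ∀ z : K, z ∈ E → Φ z = z := by
      intro z hz
      induction hz using Algebra.adjoin_induction with
      | mem w hw =>
        obtain ⟨j, rfl⟩ := hw
        show Φ ((algebraMap R K) (e j.castSucc)) = (algebraMap R K) (e j.castSucc)
        rw [hΦspec]
        exact congrArg (algebraMap R K)
          (esymm_isSymmetric (Fin (N + 1)) ℝ _ (Equiv.addLeft k))
      | algebraMap r =>
        rw [IsScalarTower.algebraMap_apply ℝ R K, hΦspec]
        rw [show (algebraMap ℝ R) r = MvPolynomial.C r from rfl, rename_C]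
      | add a b ha hb iha ihb => rw [map_add, iha, ihb]
      | mul a b ha hb iha ihb => rw [map_mul, iha, ihb]
    have hcommE : Φ.comp (algebraMap Ff K) = algebraMap Ff K := by
      apply IsLocalization.ringHom_ext (nonZeroDivisors E)
      ext x
      simp only [RingHom.comp_apply]
      rw [← IsScalarTower.algebraMap_apply E Ff K]
      exact hfix _ x.2
    let ψ : K →ₐ[Ff] K :=
      { toRingHom := Φ, commutes' := fun r => RingHom.congr_fun hcommE r }
    obtain ⟨P, hP, hPa⟩ := hq
    refine ⟨P, hP, ?_⟩
    have h1 : (algebraMap R K) (rename (Equiv.addLeft k) p) = ψ ((algebraMap R K) p) :=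
      (hΦspec p).symm
    rw [h1, Polynomial.aeval_algHom_apply ψ ((algebraMap R K) p) P,
        show (algebraMap R K) p = ι p from rfl, hPa, map_zero]
  -- the product of the conjugates is e_n ^ m
  have hprod : (∏ k : Fin (N + 1), (algebraMap R K) (rename (Equiv.addLeft k) p))
      = ((algebraMap R K) (e (Fin.last N))) ^ m := by
    rw [← map_prod, ← map_pow]
    congr 1
    rw [prod_rename N m (by omega)]
    simp [he, Fin.val_last]
  have hintProd : IsIntegral Ff
      (∏ k : Fin (N + 1), (algebraMap R K) (rename (Equiv.addLeft k) p)) :=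
    Finset.prod_induction _ _ (fun a b ha hb => ha.mul hb) isIntegral_one
      (fun k _ => isAlgebraic_iff_isIntegral.mp (halg k))
  have hpow : IsAlgebraic Ff (((algebraMap R K) (e (Fin.last N))) ^ m) :=
    isAlgebraic_iff_isIntegral.mpr (hprod ▸ hintProd)
  exact hpow.of_pow hm1

/-- For `n ≥ 2` and `1 ≤ m ≤ n - 1`, the `n` polynomials
`e₁, e₂, …, e_{n-1}, x₁ x₂ ⋯ xₘ` in `ℝ[x₁, …, xₙ]` are algebraically independent over `ℝ`,
where `eⱼ` is the `j`-th elementary symmetric polynomial in `x₁, …, xₙ`.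
(0-based: the family is indexed by `Fin n`, with index `i < n - 1` giving `e_{i+1}` and the
last index giving the product `x₁ ⋯ xₘ`.) -/
theorem stmt3 (n m : ℕ) (hn : 2 ≤ n) (hm1 : 1 ≤ m) (hm2 : m ≤ n - 1) :
    AlgebraicIndependent ℝ (fun i : Fin n =>
      if i.1 < n - 1 then
        esymOn Finset.univ (i.1 + 1) (X : Fin n → MvPolynomial (Fin n) ℝ)
      else
        ∏ j ∈ Finset.univ.filter (fun j : Fin n => j.1 < m), X j) := by
  obtain ⟨N, rfl⟩ : ∃ N, n = N + 1 := ⟨n - 1, by omega⟩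
  have hm2' : m ≤ N := by omega
  have key := (stmt3_aux N m hm1 hm2').comp ⇑finSuccEquivLast finSuccEquivLast.injective
  convert key using 1
  funext i
  induction i using Fin.lastCases with
  | last =>
    simp only [Fin.val_last, Function.comp_apply, finSuccEquivLast_last]
    rw [if_neg (by omega)]
    rfl
  | cast j =>
    simp only [Fin.coe_castSucc, Function.comp_apply, finSuccEquivLast_castSucc]
    rw [if_pos (by omega)]
    rfl
end

section
/- Let n ≥ 3, 1 ≤ p ≤ n, and let L ⊆ {1, …, n} be nonempty. Work in the polynomial ring R = ℝ[x_1, …, x_n, (y_ℓ)_{ℓ∈L}], and set z_ℓ = x_ℓ + y_ℓ for ℓ ∈ L and z_ℓ = x_ℓ for ℓ ∉ L. Let M be the n×n matrix over R[X] with M_{ℓ,ℓ} = X + z_ℓ for 1 ≤ ℓ ≤ n, M_{ℓ+1,ℓ} = −x_ℓ for 1 ≤ ℓ ≤ n−1, M_{1,n} = −x_n, and all other entries 0. Then: (i) det(M) = ∏_{ℓ=1}^n (X + z_ℓ) − ∏_{ℓ=1}^n x_ℓ; and (ii) if p ≥ 2, the determinant of the submatrix of M obtained by deleting row 1 and column p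 equals (−1)^{p−1} (x_1 x_2 ⋯ x_{p−1}) · ∏_{j=p+1}^n (X + z_j). -/
open Finset MvPolynomial

/-- In `ℝ[x₁, …, xₙ, (y_ℓ)_{ℓ ∈ L}]`: the quantity `z_ℓ = x_ℓ + y_ℓ` if `ℓ ∈ L`, and
`z_ℓ = x_ℓ` otherwise.  (`Sum.inl ℓ` is the variable `x_{ℓ+1}`, and `Sum.inr ⟨ℓ, _⟩` is the
leak variable `y_{ℓ+1}`, 0-based.) -/
noncomputable def z5 (n : ℕ) (L : Finset (Fin n)) (ℓ : Fin n) :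
    MvPolynomial (Fin n ⊕ {i : Fin n // i ∈ L}) ℝ :=
  X (Sum.inl ℓ) + if h : ℓ ∈ L then X (Sum.inr ⟨ℓ, h⟩) else 0

/-- The matrix `X•I - A` of the `n`-compartment cycle model with leak set `L`, over
`(ℝ[x, y])[X]`: diagonal entries `X + z_ℓ`, subdiagonal entries `-x_ℓ`, top-right corner
`-xₙ`, all other entries `0`. -/
noncomputable def M5 (n : ℕ) (L : Finset (Fin n)) :
    Matrix (Fin n) (Fin n) (Polynomial (MvPolynomial (Fin n ⊕ {i : Fin n // i ∈ L}) ℝ)) :=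
  Matrix.of fun i j =>
    if i = j then Polynomial.X + Polynomial.C (z5 n L j)
    else if i.1 = j.1 + 1 ∨ (i.1 = 0 ∧ j.1 = n - 1) then -Polynomial.C (X (Sum.inl j) : MvPolynomial (Fin n ⊕ {i : Fin n // i ∈ L}) ℝ)
    else 0

lemma M5_diag {n : ℕ} {L : Finset (Fin n)} (i : Fin n) :
    M5 n L i i = Polynomial.X + Polynomial.C (z5 n L i) := by
  simp [M5]

lemma M5_zero {n : ℕ} {L : Finset (Fin n)} (i j : Fin n) (h1 : i.1 ≠ j.1)
    (h2 : i.1 ≠ j.1 + 1) (h3 : ¬(i.1 = 0 ∧ j.1 = n - 1)) : M5 n L i j = 0 := by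
  unfold M5
  rw [Matrix.of_apply, if_neg (fun h => h1 (congrArg Fin.val h)),
    if_neg (by rintro (h | h) <;> [exact h2 h; exact h3 h])]

lemma M5_low {n : ℕ} {L : Finset (Fin n)} (i j : Fin n) (h : i.1 = j.1 + 1) :
    M5 n L i j = -Polynomial.C (X (Sum.inl j) : MvPolynomial (Fin n ⊕ {i : Fin n // i ∈ L}) ℝ) := by
  unfold M5
  rw [Matrix.of_apply, if_neg (fun e => by rw [e] at h; omega), if_pos (Or.inl h)]

lemma M5_corner {n : ℕ} {L : Finset (Fin n)} (i j : Fin n) (h0 : i.1 = 0)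
    (hj : j.1 = n - 1) (hne : i.1 ≠ j.1) :
    M5 n L i j = -Polynomial.C (X (Sum.inl j) : MvPolynomial (Fin n ⊕ {i : Fin n // i ∈ L}) ℝ) := by
  unfold M5
  rw [Matrix.of_apply, if_neg (fun e => hne (congrArg Fin.val e)), if_pos (Or.inr ⟨h0, hj⟩)]

lemma prodNeg {R : Type*} [CommRing R] {α : Type*} (s : Finset α) (f : α → R) :
    (∏ i ∈ s, -f i) = (-1) ^ s.card * ∏ i ∈ s, f i := by
  calc (∏ i ∈ s, -f i) = ∏ i ∈ s, ((-1) * f i) :=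
        Finset.prod_congr rfl fun i _ => (neg_one_mul _).symm
  _ = (∏ _i ∈ s, (-1 : R)) * ∏ i ∈ s, f i := Finset.prod_mul_distrib
  _ = (-1) ^ s.card * ∏ i ∈ s, f i := by rw [Finset.prod_const]

/-- For the cycle model with nonempty leak set `L`:
(i) `det M = ∏_ℓ (X + z_ℓ) - ∏_ℓ x_ℓ`, and
(ii) if `p ≥ 2`, the determinant of the submatrix of `M` obtained by deleting row `1` and
column `p` (1-based) equals `(-1)^{p-1} (x₁⋯x_{p-1}) ∏_{j=p+1}^n (X + z_j)`. -/
theorem stmt5 (n p : ℕ) (hn : 3 ≤ n) (hp1 : 1 ≤ p) (hpn : p ≤ n)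
    (L : Finset (Fin n)) (hL : L.Nonempty) :
    (M5 n L).det =
        ∏ i : Fin n, (Polynomial.X + Polynomial.C (z5 n L i)) -
          Polynomial.C (∏ i : Fin n, X (Sum.inl i)) ∧
    (2 ≤ p →
      ((M5 n L).submatrix (delIdx n 0) (delIdx n (p - 1))).det =
        (-1) ^ (p - 1) *
          Polynomial.C (∏ i ∈ Finset.univ.filter (fun i : Fin n => i.1 < p - 1),
            (X (Sum.inl i) : MvPolynomial (Fin n ⊕ {i : Fin n // i ∈ L}) ℝ)) *
          ∏ j ∈ Finset.univ.filter (fun j : Fin n => p ≤ j.1),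
            (Polynomial.X + Polynomial.C (z5 n L j))) := by
  obtain ⟨m, rfl⟩ : ∃ m, n = m + 1 := ⟨n - 1, by omega⟩
  have hm : 2 ≤ m := by omega
  constructor
  · -- part (i)
    rw [Matrix.det_succ_row_zero]
    have hne : (0 : Fin (m + 1)) ≠ Fin.last m := by
      intro h
      have := congrArg Fin.val h
      simp only [Fin.val_zero, Fin.val_last] at this
      omega
    rw [← Finset.sum_subset (Finset.subset_univ ({0, Fin.last m} : Finset (Fin (m + 1))))
      (by
        intro x _ hx
        simp only [Finset.mem_insert, Finset.mem_singleton] at hx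
        push_neg at hx
        obtain ⟨hx0, hxl⟩ := hx
        have hx0' : x.1 ≠ 0 := fun h => hx0 (Fin.ext h)
        have hxl' : x.1 ≠ m := fun h => hxl (Fin.ext (by simp only [Fin.val_last]; exact h))
        rw [M5_zero 0 x (by simp only [Fin.val_zero]; omega)
          (by simp only [Fin.val_zero]; omega) (by simp only [Fin.val_zero]; omega)]
        ring)]
    rw [Finset.sum_pair hne]
    -- first minor : lower triangular
    have h1 : ((M5 (m + 1) L).submatrix Fin.succ ((0 : Fin (m + 1)).succAbove)).det =
        ∏ i : Fin m, (Polynomial.X + Polynomial.C (z5 (m + 1) L i.succ)) := by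
      rw [Matrix.det_of_lowerTriangular _ (by
        intro i j hij
        have hij0 : i < j := hij
        have hij' : (i : ℕ) < (j : ℕ) := hij0
        rw [Matrix.submatrix_apply, Fin.succAbove_zero]
        exact M5_zero _ _ (by simp only [Fin.val_succ]; omega)
          (by simp only [Fin.val_succ]; omega) (by simp only [Fin.val_succ]; omega))]
      exact Finset.prod_congr rfl fun i _ => by
        rw [Matrix.submatrix_apply, Fin.succAbove_zero, M5_diag]
    -- last minor : upper triangular
    have h2 : ((M5 (m + 1) L).submatrix Fin.succ ((Fin.last m).succAbove)).det =
        ∏ i : Fin m, -Polynomial.C (X (Sum.inl (i.castSucc : Fin (m + 1))) : MvPolynomial (Fin (m + 1) ⊕ {i : Fin (m + 1) // i ∈ L}) ℝ) := by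
      rw [Matrix.det_of_upperTriangular (by
        intro i j hij
        have hij0 : j < i := hij
        have hij' : (j : ℕ) < (i : ℕ) := hij0
        rw [Matrix.submatrix_apply, Fin.succAbove_last]
        exact M5_zero _ _ (by simp only [Fin.val_succ, Fin.coe_castSucc]; omega)
          (by simp only [Fin.val_succ, Fin.coe_castSucc]; omega)
          (by simp only [Fin.val_succ, Fin.coe_castSucc]; omega))]
      exact Finset.prod_congr rfl fun i _ => by
        rw [Matrix.submatrix_apply, Fin.succAbove_last,
          M5_low i.succ i.castSucc (by simp only [Fin.val_succ, Fin.coe_castSucc])]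
    rw [h1, h2, M5_diag (0 : Fin (m + 1)),
      M5_corner 0 (Fin.last m) (by simp only [Fin.val_zero])
        (by simp only [Fin.val_last]; omega) (by simp only [Fin.val_zero, Fin.val_last]; omega),
      prodNeg, Finset.card_univ, Fintype.card_fin,
      Fin.prod_univ_succ (fun i : Fin (m + 1) =>
        (Polynomial.X + Polynomial.C (z5 (m + 1) L i))),
      Fin.prod_univ_castSucc (fun i : Fin (m + 1) =>
        (X (Sum.inl i) : MvPolynomial (Fin (m + 1) ⊕ {i : Fin (m + 1) // i ∈ L}) ℝ)),
      map_mul, map_prod]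
    have hpow : ((-1 : Polynomial (MvPolynomial (Fin (m + 1) ⊕ {i : Fin (m + 1) // i ∈ L}) ℝ))) ^ m
        * (-1) ^ m = 1 := by
      rw [← pow_add, ← two_mul, pow_mul]; norm_num
    simp only [Fin.val_zero, Fin.val_last, pow_zero, one_mul]
    linear_combination (-(∏ i : Fin m, (Polynomial.C (X (Sum.inl (i.castSucc : Fin (m + 1))))
        : Polynomial (MvPolynomial (Fin (m + 1) ⊕ {i : Fin (m + 1) // i ∈ L}) ℝ))) *
      Polynomial.C (X (Sum.inl (Fin.last m)))) * hpow
  · -- part (ii)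
    intro hp2
    have hrowval : ∀ k : Fin (m + 1 - 1), (delIdx (m + 1) 0 k).1 = k.1 + 1 := by
      intro k; unfold delIdx; rw [if_neg (by omega)]
    have hcolval : ∀ k : Fin (m + 1 - 1),
        (delIdx (m + 1) (p - 1) k).1 = if k.1 < p - 1 then k.1 else k.1 + 1 := by
      intro k; unfold delIdx; split_ifs <;> rfl
    -- the reversing involution on the first p-1 indices
    have hs : Function.Involutive (fun k : Fin (m + 1 - 1) =>
        if k.1 < p - 1 then (⟨p - 2 - k.1, by have := k.isLt; omega⟩ : Fin (m + 1 - 1))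
        else k) := by
      intro k
      dsimp only
      split_ifs with h1 h2 h3 <;>
        first
          | rfl
          | (apply Fin.ext; simp only [Fin.val_mk] at *; omega)
    set σ : Equiv.Perm (Fin (m + 1 - 1)) := hs.toPerm _ with hσdef
    have hσval : ∀ k : Fin (m + 1 - 1), (σ k).1 = if k.1 < p - 1 then p - 2 - k.1 else k.1 := by
      intro k
      show ((if k.1 < p - 1 then (⟨p - 2 - k.1, by have := k.isLt; omega⟩ : Fin (m + 1 - 1))
        else k)).1 = _
      split_ifs with h <;> rfl
    set B := (M5 (m + 1) L).submatrix (delIdx (m + 1) 0) (delIdx (m + 1) (p - 1)) with hBdef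
    have htri : (B.submatrix σ σ).BlockTriangular OrderDual.toDual := by
      intro i j hij
      have hij0 : i < j := hij
      have hij' : (i : ℕ) < (j : ℕ) := hij0
      rw [Matrix.submatrix_apply, hBdef, Matrix.submatrix_apply]
      apply M5_zero
      · rw [hrowval, hcolval, hσval i, hσval j]; split_ifs <;> omega
      · rw [hrowval, hcolval, hσval i, hσval j]; split_ifs <;> omega
      · rw [hrowval]; omega
    have hdiag : ∀ k : Fin (m + 1 - 1), B k k =
        (if k.1 < p - 1
         then -Polynomial.C (X (Sum.inl (⟨k.1, by have := k.isLt; omega⟩ : Fin (m + 1))) : MvPolynomial (Fin (m + 1) ⊕ {i : Fin (m + 1) // i ∈ L}) ℝ)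
         else Polynomial.X +
            Polynomial.C (z5 (m + 1) L ⟨k.1 + 1, by have := k.isLt; omega⟩)) := by
      intro k
      rw [hBdef, Matrix.submatrix_apply]
      by_cases hk : k.1 < p - 1
      · rw [if_pos hk]
        have hcol : delIdx (m + 1) (p - 1) k = ⟨k.1, by have := k.isLt; omega⟩ :=
          Fin.ext (by rw [hcolval k, if_pos hk])
        rw [hcol]
        exact M5_low _ _ (by rw [hrowval])
      · rw [if_neg hk]
        have hcol : delIdx (m + 1) (p - 1) k = ⟨k.1 + 1, by have := k.isLt; omega⟩ :=
          Fin.ext (by rw [hcolval k, if_neg hk])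
        have hrow : delIdx (m + 1) 0 k = ⟨k.1 + 1, by have := k.isLt; omega⟩ :=
          Fin.ext (hrowval k)
        rw [hcol, hrow]
        exact M5_diag _
    have hdet : B.det = ∏ k : Fin (m + 1 - 1), B k k := by
      rw [← Matrix.det_submatrix_equiv_self σ B, Matrix.det_of_lowerTriangular _ htri]
      exact Equiv.prod_comp σ (fun k => B k k)
    have hcard : (Finset.univ.filter (fun k : Fin (m + 1 - 1) => k.1 < p - 1)).card = p - 1 := by
      conv_rhs => rw [← Finset.card_range (p - 1)]
      refine Finset.card_bij' (fun (a : Fin (m + 1 - 1)) _ => a.1)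
        (fun b hb => (⟨b, by have := Finset.mem_range.mp hb; omega⟩ : Fin (m + 1 - 1)))
        (fun a ha => ?_) (fun b hb => ?_) (fun a ha => ?_) (fun b hb => ?_)
      · exact Finset.mem_range.mpr (Finset.mem_filter.mp ha).2
      · exact Finset.mem_filter.mpr ⟨Finset.mem_univ _, Finset.mem_range.mp hb⟩
      · exact Fin.ext rfl
      · rfl
    -- product over small filter equals product over big filter (x-variables)
    have hx : (∏ k ∈ Finset.univ.filter (fun k : Fin (m + 1 - 1) => k.1 < p - 1),
          (X (Sum.inl (⟨k.1, by have := k.isLt; omega⟩ : Fin (m + 1)))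
            : MvPolynomial (Fin (m + 1) ⊕ {i : Fin (m + 1) // i ∈ L}) ℝ)) =
        ∏ i ∈ Finset.univ.filter (fun i : Fin (m + 1) => i.1 < p - 1), X (Sum.inl i) := by
      refine Finset.prod_bij'
        (fun (a : Fin (m + 1 - 1)) _ => (⟨a.1, by have := a.isLt; omega⟩ : Fin (m + 1)))
        (fun b hb => (⟨b.1, by
          have := (Finset.mem_filter.mp hb).2; omega⟩ : Fin (m + 1 - 1)))
        (fun a ha => ?_) (fun b hb => ?_) (fun a ha => ?_) (fun b hb => ?_) (fun a ha => ?_)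
      · exact Finset.mem_filter.mpr ⟨Finset.mem_univ _, (Finset.mem_filter.mp ha).2⟩
      · exact Finset.mem_filter.mpr ⟨Finset.mem_univ _, (Finset.mem_filter.mp hb).2⟩
      · exact Fin.ext rfl
      · exact Fin.ext rfl
      · rfl
    -- product over small filter equals product over big filter (diagonal terms)
    have hz : (∏ k ∈ Finset.univ.filter (fun k : Fin (m + 1 - 1) => ¬ k.1 < p - 1),
          (Polynomial.X +
            Polynomial.C (z5 (m + 1) L ⟨k.1 + 1, by have := k.isLt; omega⟩))) =
        ∏ j ∈ Finset.univ.filter (fun j : Fin (m + 1) => p ≤ j.1),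
          (Polynomial.X + Polynomial.C (z5 (m + 1) L j)) := by
      refine Finset.prod_bij'
        (fun (a : Fin (m + 1 - 1)) _ => (⟨a.1 + 1, by have := a.isLt; omega⟩ : Fin (m + 1)))
        (fun b hb => (⟨b.1 - 1, by
          have h1 := (Finset.mem_filter.mp hb).2
          have h2 := b.isLt
          omega⟩ : Fin (m + 1 - 1)))
        (fun a ha => ?_) (fun b hb => ?_) (fun a ha => ?_) (fun b hb => ?_) (fun a ha => ?_)
      · refine Finset.mem_filter.mpr ⟨Finset.mem_univ _, ?_⟩
        have := (Finset.mem_filter.mp ha).2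
        show p ≤ a.1 + 1
        omega
      · refine Finset.mem_filter.mpr ⟨Finset.mem_univ _, ?_⟩
        have := (Finset.mem_filter.mp hb).2
        show ¬ b.1 - 1 < p - 1
        omega
      · exact Fin.ext rfl
      · have := (Finset.mem_filter.mp hb).2
        exact Fin.ext (by show b.1 - 1 + 1 = b.1; omega)
      · rfl
    calc B.det = ∏ k : Fin (m + 1 - 1), B k k := hdet
      _ = ∏ k : Fin (m + 1 - 1),
            (if k.1 < p - 1
             then -Polynomial.C (X (Sum.inl (⟨k.1, by have := k.isLt; omega⟩ : Fin (m + 1))) : MvPolynomial (Fin (m + 1) ⊕ {i : Fin (m + 1) // i ∈ L}) ℝ)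
             else Polynomial.X +
                Polynomial.C (z5 (m + 1) L ⟨k.1 + 1, by have := k.isLt; omega⟩)) :=
          Finset.prod_congr rfl fun k _ => hdiag k
      _ = (∏ k ∈ Finset.univ.filter (fun k : Fin (m + 1 - 1) => k.1 < p - 1),
            -Polynomial.C (X (Sum.inl (⟨k.1, by have := k.isLt; omega⟩ : Fin (m + 1))) : MvPolynomial (Fin (m + 1) ⊕ {i : Fin (m + 1) // i ∈ L}) ℝ)) *
          (∏ k ∈ Finset.univ.filter (fun k : Fin (m + 1 - 1) => ¬ k.1 < p - 1),
            (Polynomial.X +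
              Polynomial.C (z5 (m + 1) L ⟨k.1 + 1, by have := k.isLt; omega⟩))) :=
          Finset.prod_ite _ _
      _ = ((-1) ^ (p - 1) *
            Polynomial.C (∏ i ∈ Finset.univ.filter (fun i : Fin (m + 1) => i.1 < p - 1),
              (X (Sum.inl i) : MvPolynomial (Fin (m + 1) ⊕ {i : Fin (m + 1) // i ∈ L}) ℝ))) *
          (∏ j ∈ Finset.univ.filter (fun j : Fin (m + 1) => p ≤ j.1),
            (Polynomial.X + Polynomial.C (z5 (m + 1) L j))) := by
          refine congrArg₂ (· * ·) ?_ hz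
          rw [prodNeg, hcard, ← hx, map_prod]
      _ = (-1) ^ (p - 1) *
            Polynomial.C (∏ i ∈ Finset.univ.filter (fun i : Fin (m + 1) => i.1 < p - 1),
              (X (Sum.inl i) : MvPolynomial (Fin (m + 1) ⊕ {i : Fin (m + 1) // i ∈ L}) ℝ)) *
          ∏ j ∈ Finset.univ.filter (fun j : Fin (m + 1) => p ≤ j.1),
            (Polynomial.X + Polynomial.C (z5 (m + 1) L j)) := by ring
end

section
/- Let n ≥ 3, 1 ≤ p ≤ n, and q ∈ {1, …, n}. Work in ℝ[x_1, …, x_n, y], and set z_q = x_q + y and z_ℓ = x_ℓ for ℓ ≠ q. Consider the 2n−p+1 polynomials: e_m(z_1, …, z_n) for m = 1, …, n−1; e_n(z_1, …, z_n) − x_1 x_2 ⋯ x_n; κ := x_1 x_2 ⋯ x_{p−1} (the empty product 1 if p = 1); and e_j(z_{p+1}, …, z_n) · κ for j = 1, …, n−p, where e_m denotes the m-th elementary symmetric polynomial in the listed arguments. Then the Jacobian matrix of this family with respect to the n+1 variables x_1, …, x_n, y, viewed over the field of rational functions ℝ(x_1, …, x_n, y), has rank n+1. -/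
set_option linter.unusedSectionVars false
set_option maxHeartbeats 2000000

open Finset MvPolynomial

/-- In `ℝ[x₁, …, xₙ, y]` (variables `Fin n ⊕ Unit`, with `Sum.inr ()` the leak variable `y`):
`z_q = x_q + y` and `z_ℓ = x_ℓ` for `ℓ ≠ q`. -/
noncomputable def z6 (n : ℕ) (q ℓ : Fin n) : MvPolynomial (Fin n ⊕ Unit) ℝ :=
  X (Sum.inl ℓ) + if ℓ = q then X (Sum.inr ()) else 0

/-- The `2n - p + 1` coefficients of the input-output equation of the cycle model with input
in compartment `1`, output in compartment `p`, and a single leak in compartment `q`: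
`e₁(z), …, e_{n-1}(z)`, `eₙ(z) - x₁⋯xₙ`, `κ = x₁⋯x_{p-1}` (the empty product `1` if `p = 1`),
and `eⱼ(z_{p+1}, …, zₙ)·κ` for `j = 1, …, n - p`. -/
noncomputable def coeffs6 (n p : ℕ) (q : Fin n) (m : Fin (2 * n - p + 1)) :
    MvPolynomial (Fin n ⊕ Unit) ℝ :=
  if m.1 < n - 1 then esymOn Finset.univ (m.1 + 1) (z6 n q)
  else if m.1 = n - 1 then
    esymOn Finset.univ n (z6 n q) - ∏ i : Fin n, X (Sum.inl i)
  else if m.1 = n then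
    ∏ i ∈ Finset.univ.filter (fun i : Fin n => i.1 < p - 1), X (Sum.inl i)
  else
    esymOn (Finset.univ.filter (fun i : Fin n => p ≤ i.1)) (m.1 - n) (z6 n q) *
      ∏ i ∈ Finset.univ.filter (fun i : Fin n => i.1 < p - 1), X (Sum.inl i)



open Finset MvPolynomial

section Swap
variable {ι M : Type*} [DecidableEq ι] [AddCommMonoid M]

lemma sum_powersetCard_swap (s : Finset ι) (m : ℕ) (F : ι → Finset ι → M) :
    ∑ t ∈ powersetCard (m+1) s, ∑ i ∈ t, F i (t.erase i)
      = ∑ i ∈ s, ∑ t ∈ powersetCard m (s.erase i), F i t := by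
  rw [Finset.sum_sigma', Finset.sum_sigma']
  refine Finset.sum_nbij' (fun x => ⟨x.2, x.1.erase x.2⟩) (fun x => ⟨insert x.1 x.2, x.1⟩)
    ?_ ?_ ?_ ?_ ?_
  · rintro ⟨t, i⟩ hx
    simp only [Finset.mem_sigma, Finset.mem_powersetCard] at hx ⊢
    obtain ⟨⟨hts, htc⟩, hit⟩ := hx
    refine ⟨hts hit, Finset.erase_subset_erase _ hts, ?_⟩
    rw [Finset.card_erase_of_mem hit, htc]
    rfl
  · rintro ⟨i, t⟩ hx
    simp only [Finset.mem_sigma, Finset.mem_powersetCard] at hx ⊢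
    obtain ⟨his, hts, htc⟩ := hx
    have hit : i ∉ t := fun h => (Finset.mem_erase.1 (hts h)).1 rfl
    constructor
    · constructor
      · exact Finset.insert_subset his (hts.trans (Finset.erase_subset _ _))
      · rw [Finset.card_insert_of_notMem hit, htc]
    · exact Finset.mem_insert_self _ _
  · rintro ⟨t, i⟩ hx
    simp only [Finset.mem_sigma, Finset.mem_powersetCard] at hx
    simp [Finset.insert_erase hx.2]
  · rintro ⟨i, t⟩ hx
    simp only [Finset.mem_sigma, Finset.mem_powersetCard] at hx
    have hit : i ∉ t := fun h => (Finset.mem_erase.1 (hx.2.1 h)).1 rfl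
    simp [Finset.erase_insert hit]
  · rintro ⟨t, i⟩ _; rfl

end Swap

section LfSec
variable {σ : Type*} [Fintype σ] [DecidableEq σ] {K : Type*} [CommRing K]

/-- The derivation-like functional `f ↦ ∑ᵥ cᵥ · φ(∂f/∂v)`. -/
noncomputable def Lf (φ : MvPolynomial σ ℝ →+* K) (c : σ → K) (f : MvPolynomial σ ℝ) : K :=
  ∑ v, φ ((pderiv v) f) * c v

variable (φ : MvPolynomial σ ℝ →+* K) (c : σ → K)

lemma Lf_add (f g : MvPolynomial σ ℝ) : Lf φ c (f + g) = Lf φ c f + Lf φ c g := by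
  simp [Lf, Finset.sum_add_distrib, add_mul]

lemma Lf_sub (f g : MvPolynomial σ ℝ) : Lf φ c (f - g) = Lf φ c f - Lf φ c g := by
  simp [Lf, Finset.sum_sub_distrib, sub_mul]

lemma Lf_zero : Lf φ c 0 = 0 := by simp [Lf]

lemma Lf_C (r : ℝ) : Lf φ c (C r) = 0 := by simp [Lf]

lemma Lf_one : Lf φ c 1 = 0 := by simp [Lf]

lemma Lf_X (v : σ) : Lf φ c (X v) = c v := by
  rw [Lf, Finset.sum_eq_single v]
  · simp
  · intro u _ huv
    rw [pderiv_X]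
    rw [Pi.single_apply, if_neg (fun h => huv h.symm)]
    simp
  · simp

lemma Lf_mul (f g : MvPolynomial σ ℝ) :
    Lf φ c (f * g) = φ f * Lf φ c g + φ g * Lf φ c f := by
  simp only [Lf, pderiv_mul, map_add, map_mul, add_mul, Finset.sum_add_distrib,
    Finset.mul_sum]
  rw [add_comm]
  congr 1 <;> exact Finset.sum_congr rfl fun v _ => by ring

lemma Lf_sum {ι : Type*} (s : Finset ι) (f : ι → MvPolynomial σ ℝ) :
    Lf φ c (∑ i ∈ s, f i) = ∑ i ∈ s, Lf φ c (f i) := by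
  simp only [Lf, map_sum, Finset.sum_mul]
  rw [Finset.sum_comm]

lemma Lf_prod {ι : Type*} [DecidableEq ι] (s : Finset ι) (f : ι → MvPolynomial σ ℝ) :
    Lf φ c (∏ i ∈ s, f i) = ∑ i ∈ s, φ (∏ j ∈ s.erase i, f j) * Lf φ c (f i) := by
  induction s using Finset.induction_on with
  | empty => simp [Lf_one]
  | insert a s' ha ih =>
    rw [Finset.prod_insert ha, Lf_mul, ih, Finset.sum_insert ha, Finset.erase_insert ha]
    rw [Finset.mul_sum]
    rw [add_comm]
    congr 1
    refine Finset.sum_congr rfl fun i hi => ?_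
    have hia : i ≠ a := fun h => ha (h ▸ hi)
    rw [Finset.erase_insert_of_ne hia.symm, Finset.prod_insert (fun h => ha (Finset.erase_subset _ _ h)),
      map_mul, mul_assoc]

lemma map_esymOn {ι : Type*} (s : Finset ι) (m : ℕ) (f : ι → MvPolynomial σ ℝ) :
    φ (esymOn s m f) = esymOn s m (fun i => φ (f i)) := by
  simp [esymOn, map_sum, map_prod]

lemma Lf_esymOn {ι : Type*} [DecidableEq ι] (s : Finset ι) (m : ℕ) (f : ι → MvPolynomial σ ℝ) :
    Lf φ c (esymOn s (m+1) f)
      = ∑ i ∈ s, esymOn (s.erase i) m (fun j => φ (f j)) * Lf φ c (f i) := by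
  rw [esymOn, Lf_sum]
  have h1 : ∀ t ∈ powersetCard (m+1) s,
      Lf φ c (∏ i ∈ t, f i) = ∑ i ∈ t, φ (∏ j ∈ t.erase i, f j) * Lf φ c (f i) :=
    fun t _ => Lf_prod φ c t f
  rw [Finset.sum_congr rfl h1]
  rw [sum_powersetCard_swap s m (fun i t => φ (∏ j ∈ t, f j) * Lf φ c (f i))]
  refine Finset.sum_congr rfl fun i _ => ?_
  rw [esymOn, Finset.sum_mul]
  refine Finset.sum_congr rfl fun t _ => ?_
  rw [map_prod]

end LfSec

open Finset MvPolynomial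

section QpolySec
variable {ι : Type*} [DecidableEq ι] {K : Type*} [CommRing K] [Nontrivial K]

/-- `Q(t) = ∑_{i ∈ sub} w i · ∏_{j ∈ B.erase i} (t - u j)`. -/
noncomputable def Qpoly (B sub : Finset ι) (u w : ι → K) : Polynomial K :=
  ∑ i ∈ sub, Polynomial.C (w i) * ∏ j ∈ B.erase i, (Polynomial.X - Polynomial.C (u j))

lemma Qpoly_eval (B sub : Finset ι) (u w : ι → K) (a : K) :
    (Qpoly B sub u w).eval a = ∑ i ∈ sub, w i * ∏ j ∈ B.erase i, (a - u j) := by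
  simp [Qpoly, Polynomial.eval_finset_sum, Polynomial.eval_prod]

lemma prod_X_sub_C_coeff' (s : Finset ι) (u : ι → K) {k : ℕ} (hk : k ≤ s.card) :
    (∏ j ∈ s, (Polynomial.X - Polynomial.C (u j))).coeff k
      = (-1) ^ (s.card - k) * esymOn s (s.card - k) u := by
  have h1 : (∏ j ∈ s, (Polynomial.X - Polynomial.C (u j)))
      = (Multiset.map (fun t => Polynomial.X - Polynomial.C t) (s.val.map u)).prod := by
    rw [Multiset.map_map]
    rfl
  have hcard : Multiset.card (s.val.map u) = s.card := by simp
  rw [h1, Multiset.prod_X_sub_C_coeff _ (by rwa [hcard]), hcard, Finset.esymm_map_val]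
  rfl

lemma Qpoly_coeff_of_lt (B sub : Finset ι) (u w : ι → K) (hsub : sub ⊆ B) {k : ℕ}
    (hk : k < B.card) :
    (Qpoly B sub u w).coeff k
      = (-1) ^ (B.card - 1 - k) * ∑ i ∈ sub, esymOn (B.erase i) (B.card - 1 - k) u * w i := by
  rw [Qpoly, Polynomial.finset_sum_coeff, Finset.mul_sum]
  refine Finset.sum_congr rfl fun i hi => ?_
  have hce : (B.erase i).card = B.card - 1 := Finset.card_erase_of_mem (hsub hi)
  rw [Polynomial.coeff_C_mul, prod_X_sub_C_coeff' _ _ (by omega), hce]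
  ring

lemma Qpoly_coeff_of_ge (B sub : Finset ι) (u w : ι → K) (hsub : sub ⊆ B) {k : ℕ}
    (hk : B.card ≤ k) (hB : B.Nonempty) :
    (Qpoly B sub u w).coeff k = 0 := by
  rw [Qpoly, Polynomial.finset_sum_coeff]
  refine Finset.sum_eq_zero fun i hi => ?_
  refine Polynomial.coeff_eq_zero_of_natDegree_lt ?_
  have h2 : (∏ j ∈ B.erase i, (Polynomial.X - Polynomial.C (u j))).natDegree ≤ B.card - 1 := by
    refine le_trans (Polynomial.natDegree_prod_le _ _) ?_
    have hs : ∀ j ∈ B.erase i, (Polynomial.X - Polynomial.C (u j)).natDegree = 1 :=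
      fun j _ => Polynomial.natDegree_X_sub_C (u j)
    rw [Finset.sum_congr rfl hs, Finset.sum_const, smul_eq_mul, mul_one,
      Finset.card_erase_of_mem (hsub hi)]
  have := Polynomial.natDegree_C_mul_le (w i) (∏ j ∈ B.erase i, (Polynomial.X - Polynomial.C (u j)))
  have hB1 : 1 ≤ B.card := Finset.card_pos.2 hB
  omega

lemma Qpoly_eq_C (B sub : Finset ι) (u w : ι → K) (g : K) (hsub : sub ⊆ B) (hB : B.Nonempty)
    (h : ∀ m, m < B.card →
      (∑ i ∈ sub, esymOn (B.erase i) m u * w i) = if m = B.card - 1 then g else 0) :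
    Qpoly B sub u w = Polynomial.C ((-1) ^ (B.card - 1) * g) := by
  have hB1 : 1 ≤ B.card := Finset.card_pos.2 hB
  ext k
  rcases lt_or_ge k B.card with hk | hk
  · rw [Qpoly_coeff_of_lt B sub u w hsub hk, h _ (by omega)]
    rcases Nat.eq_zero_or_pos k with rfl | hk0
    · rw [if_pos (by omega), Polynomial.coeff_C_zero, Nat.sub_zero]
    · rw [if_neg (by omega), Polynomial.coeff_C, if_neg (by omega), mul_zero]
  · rw [Qpoly_coeff_of_ge B sub u w hsub hk hB, Polynomial.coeff_C, if_neg (by omega)]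

lemma Qpoly_eval_node (B sub : Finset ι) (u w : ι → K) (hsub : sub ⊆ B) {i : ι} (hi : i ∈ sub) :
    (Qpoly B sub u w).eval (u i) = w i * ∏ j ∈ B.erase i, (u i - u j) := by
  rw [Qpoly_eval, Finset.sum_eq_single i]
  · intro l hl hli
    refine mul_eq_zero_of_right _ (Finset.prod_eq_zero (i := i) ?_ (sub_self _))
    exact Finset.mem_erase.2 ⟨fun h => hli h.symm, hsub hi⟩
  · intro h; exact absurd hi h
lemma Qpoly_eval_off (B sub : Finset ι) (u w : ι → K) {s₀ : ι} (hs₀B : s₀ ∈ B)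
    (hs₀ : s₀ ∉ sub) : (Qpoly B sub u w).eval (u s₀) = 0 := by
  rw [Qpoly_eval]
  refine Finset.sum_eq_zero fun l hl => ?_
  refine mul_eq_zero_of_right _ (Finset.prod_eq_zero (i := s₀) ?_ (sub_self _))
  exact Finset.mem_erase.2 ⟨fun h => hs₀ (h ▸ hl), hs₀B⟩

end QpolySec

open Finset MvPolynomial

section Helpers
variable {n p : ℕ} {q : Fin n}

lemma coeffs6_eq1 {m : Fin (2*n-p+1)} (h : m.1 < n - 1) :
    coeffs6 n p q m = esymOn Finset.univ (m.1 + 1) (z6 n q) := by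
  rw [coeffs6, if_pos h]

lemma coeffs6_eq2 {m : Fin (2*n-p+1)} (h : m.1 = n - 1) (hn : 3 ≤ n) :
    coeffs6 n p q m = esymOn Finset.univ n (z6 n q) - ∏ i : Fin n, X (Sum.inl i) := by
  rw [coeffs6, if_neg (by omega), if_pos h]

lemma coeffs6_eq3 {m : Fin (2*n-p+1)} (h : m.1 = n) (hn : 3 ≤ n) :
    coeffs6 n p q m
      = ∏ i ∈ Finset.univ.filter (fun i : Fin n => i.1 < p - 1), X (Sum.inl i) := by
  rw [coeffs6, if_neg (by omega), if_neg (by omega), if_pos h]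

lemma coeffs6_eq4 {m : Fin (2*n-p+1)} (h : n < m.1) (hn : 3 ≤ n) :
    coeffs6 n p q m
      = esymOn (Finset.univ.filter (fun i : Fin n => p ≤ i.1)) (m.1 - n) (z6 n q) *
          ∏ i ∈ Finset.univ.filter (fun i : Fin n => i.1 < p - 1), X (Sum.inl i) := by
  rw [coeffs6, if_neg (by omega), if_neg (by omega), if_neg (by omega)]

/-- The evaluation point `xⱼ = j`, `y = 0`. -/
noncomputable def a₀ (n : ℕ) : Fin n ⊕ Unit → ℝ := Sum.elim (fun j => (j.1 : ℝ)) (fun _ => 0)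

lemma eval_a₀_z6 (l : Fin n) : eval (a₀ n) (z6 n q l) = (l.1 : ℝ) := by
  rcases eq_or_ne l q with rfl | hl <;> simp [z6, a₀, *]

lemma eval_a₀_X (l : Fin n) : eval (a₀ n) (X (Sum.inl l) : MvPolynomial (Fin n ⊕ Unit) ℝ)
    = (l.1 : ℝ) := by simp [a₀]

lemma z6_sub_ne_zero {i j : Fin n} (hij : i ≠ j) : z6 n q i - z6 n q j ≠ 0 := by
  intro h
  have h2 := congrArg (eval (fun v => if v = Sum.inl i then (1:ℝ) else 0)) h
  rw [map_sub, map_zero] at h2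
  have e1 : eval (fun v => if v = Sum.inl i then (1:ℝ) else 0) (z6 n q i) = 1 := by
    rcases eq_or_ne i q with rfl | hiq <;> simp [z6, *]
  have e2 : eval (fun v => if v = Sum.inl i then (1:ℝ) else 0) (z6 n q j) = 0 := by
    have hji : (Sum.inl j : Fin n ⊕ Unit) ≠ Sum.inl i := by
      simp only [ne_eq, Sum.inl.injEq]; exact fun h => hij h.symm
    rcases eq_or_ne j q with rfl | hjq <;> simp [z6, hji, *]
  rw [e1, e2] at h2
  norm_num at h2

lemma prodZ_erase (hq : True) (i : Fin n) :
    ∏ j ∈ Finset.univ.erase i, z6 n q j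
      = ∏ j ∈ Finset.univ.erase i, X (Sum.inl j)
        + (if i = q then 0 else
            X (Sum.inr ()) * ∏ j ∈ (Finset.univ.erase q).erase i, X (Sum.inl j)) := by
  classical
  rcases eq_or_ne i q with rfl | hiq
  · rw [if_pos rfl, add_zero]
    exact Finset.prod_congr rfl fun j hj => by simp [z6, (Finset.mem_erase.1 hj).1]
  · rw [if_neg hiq]
    have hqmem : q ∈ Finset.univ.erase i := Finset.mem_erase.2 ⟨fun h => hiq h.symm, Finset.mem_univ _⟩
    rw [← Finset.mul_prod_erase _ _ hqmem, ← Finset.mul_prod_erase _ (fun j => X (Sum.inl j)) hqmem]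
    have hz : ∀ j ∈ (Finset.univ.erase i).erase q, z6 n q j = X (Sum.inl j) :=
      fun j hj => by simp [z6, (Finset.mem_erase.1 hj).1]
    rw [Finset.prod_congr rfl hz]
    have hzq : z6 n q q = X (Sum.inl q) + X (Sum.inr ()) := by simp [z6]
    have hec : (Finset.univ.erase i).erase q = (Finset.univ.erase q).erase i := by
      ext x; simp only [Finset.mem_erase]; tauto
    rw [hzq, hec]
    ring

end Helpers

/-- The Jacobian of the coefficient map of the cycle model with input in compartment 1,
output in compartment `p`, and one leak in compartment `q`, with respect to the `n + 1`
variables `x₁, …, xₙ, y`, viewed over the field `ℝ(x₁, …, xₙ, y)`, has full rank `n + 1`. -/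
theorem stmt6 (n p : ℕ) (hn : 3 ≤ n) (hp1 : 1 ≤ p) (hpn : p ≤ n) (q : Fin n) :
    (Matrix.of fun (m : Fin (2 * n - p + 1)) (v : Fin n ⊕ Unit) =>
        algebraMap (MvPolynomial (Fin n ⊕ Unit) ℝ)
          (FractionRing (MvPolynomial (Fin n ⊕ Unit) ℝ))
          (pderiv v (coeffs6 n p q m))).rank = n + 1 := by
  classical
  have hn1 : n - 1 + 1 = n := by omega
  set P : Type := MvPolynomial (Fin n ⊕ Unit) ℝ with hP
  set K := FractionRing (MvPolynomial (Fin n ⊕ Unit) ℝ) with hK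
  set φ : MvPolynomial (Fin n ⊕ Unit) ℝ →+* K :=
    (algebraMap (MvPolynomial (Fin n ⊕ Unit) ℝ) K) with hφ
  have hφinj : Function.Injective φ := IsFractionRing.injective _ _
  set J : Matrix (Fin (2*n-p+1)) (Fin n ⊕ Unit) K :=
    Matrix.of (fun m v => φ (pderiv v (coeffs6 n p q m))) with hJ
  have hZne : ∀ i j : Fin n, i ≠ j → φ (z6 n q i) - φ (z6 n q j) ≠ 0 := by
    intro i j hij
    rw [← map_sub]
    exact (map_ne_zero_iff φ hφinj).2 (z6_sub_ne_zero hij)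
  have hXne : ∀ i : Fin n, φ (X (Sum.inl i)) ≠ 0 :=
    fun i => (map_ne_zero_iff φ hφinj).2 (MvPolynomial.X_ne_zero _)
  have hinj : Function.Injective J.mulVecLin := by
    rw [← LinearMap.ker_eq_bot, LinearMap.ker_eq_bot']
    intro c hc
    have hrow : ∀ m : Fin (2*n-p+1), Lf φ c (coeffs6 n p q m) = 0 := by
      intro m
      have h := congrFun hc m
      simpa [hJ, Matrix.mulVecLin_apply, Matrix.mulVec, dotProduct, Lf] using h
    have hwdef : ∀ i : Fin n,
        Lf φ c (z6 n q i) = c (Sum.inl i) + (if i = q then c (Sum.inr ()) else 0) := by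
      intro i
      rw [z6, Lf_add, Lf_X]
      congr 1
      rcases eq_or_ne i q with rfl | hiq
      · rw [if_pos rfl, if_pos rfl, Lf_X]
      · rw [if_neg hiq, if_neg hiq, Lf_zero]
    have hA : ∀ m : ℕ, m < n - 1 →
        ∑ i : Fin n, esymOn (Finset.univ.erase i) m (fun j => φ (z6 n q j))
          * Lf φ c (z6 n q i) = 0 := by
      intro m hm
      have hb : m < 2*n-p+1 := by omega
      have h := hrow ⟨m, hb⟩
      rw [coeffs6_eq1 hm, Lf_esymOn] at h
      exact h
    have hB : ∑ i : Fin n, esymOn (Finset.univ.erase i) (n-1) (fun j => φ (z6 n q j))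
          * Lf φ c (z6 n q i)
        = Lf φ c (∏ i : Fin n, X (Sum.inl i)) := by
      have hb : n - 1 < 2*n-p+1 := by omega
      have h := hrow ⟨n-1, hb⟩
      rw [coeffs6_eq2 rfl hn, Lf_sub] at h
      have he : esymOn (Finset.univ : Finset (Fin n)) n (z6 n q)
          = esymOn Finset.univ ((n-1)+1) (z6 n q) := by rw [hn1]
      rw [he, Lf_esymOn, sub_eq_zero] at h
      exact h
    have hκ : Lf φ c (∏ i ∈ Finset.univ.filter (fun i : Fin n => i.1 < p - 1),
        X (Sum.inl i)) = 0 := by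
      have hb : n < 2*n-p+1 := by omega
      have h := hrow ⟨n, hb⟩
      rwa [coeffs6_eq3 rfl hn] at h
    have hκPne : φ (∏ i ∈ Finset.univ.filter (fun i : Fin n => i.1 < p - 1),
        X (Sum.inl i)) ≠ 0 := by
      refine (map_ne_zero_iff φ hφinj).2 ?_
      rw [Finset.prod_ne_zero_iff]
      exact fun i _ => MvPolynomial.X_ne_zero _
    have hC : ∀ m : ℕ, m < n - p →
        ∑ i ∈ Finset.univ.filter (fun i : Fin n => p ≤ i.1),
          esymOn ((Finset.univ.filter (fun i : Fin n => p ≤ i.1)).erase i) m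
            (fun j => φ (z6 n q j)) * Lf φ c (z6 n q i) = 0 := by
      intro m hm
      have hb : n + (m+1) < 2*n-p+1 := by omega
      have h := hrow ⟨n + (m+1), hb⟩
      rw [coeffs6_eq4 (by show n < n + (m+1); omega) hn] at h
      have hmm : (⟨n + (m+1), hb⟩ : Fin (2*n-p+1)).1 - n = m + 1 := by
        simp
      rw [hmm, Lf_mul, hκ, mul_zero, zero_add, Lf_esymOn] at h
      rcases mul_eq_zero.1 h with h' | h'
      · exact absurd h' hκPne
      · exact h'
    have cardT : (Finset.univ.filter (fun i : Fin n => i.1 < p)).card = p := by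
      have key : (Finset.univ.filter (fun i : Fin n => i.1 < p)).card
          = (Finset.univ : Finset (Fin p)).card := by
        refine Finset.card_bij
          (fun (a : Fin n) (ha : a ∈ Finset.univ.filter (fun i : Fin n => i.1 < p)) =>
            (⟨a.1, (Finset.mem_filter.1 ha).2⟩ : Fin p))
          (fun a ha => Finset.mem_univ _) ?_ ?_
        · intro a ha b hb hab
          have := congrArg Fin.val hab
          simp only [] at this
          exact Fin.ext this
        · intro b _
          exact ⟨⟨b.1, lt_of_lt_of_le b.2 hpn⟩, Finset.mem_filter.2 ⟨Finset.mem_univ _, b.2⟩, rfl⟩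
      rw [key, Finset.card_univ, Fintype.card_fin]
    have cardS : (Finset.univ.filter (fun i : Fin n => p ≤ i.1)).card = n - p := by
      have h := Finset.card_filter_add_card_filter_not
        (s := (Finset.univ : Finset (Fin n))) (p := fun i : Fin n => i.1 < p)
      have h2 : Finset.univ.filter (fun i : Fin n => ¬ i.1 < p)
          = Finset.univ.filter (fun i : Fin n => p ≤ i.1) := by
        apply Finset.filter_congr; intro i _; simp [not_lt]
      rw [h2, cardT, Finset.card_univ, Fintype.card_fin] at h
      omega
    have hS0 : ∀ i ∈ Finset.univ.filter (fun i : Fin n => p ≤ i.1),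
        Lf φ c (z6 n q i) = 0 := by
      intro i hi
      have hQS := Qpoly_eq_C (Finset.univ.filter (fun i : Fin n => p ≤ i.1))
        (Finset.univ.filter (fun i : Fin n => p ≤ i.1))
        (fun j => φ (z6 n q j)) (fun j => Lf φ c (z6 n q j)) 0 (le_refl _) ⟨i, hi⟩
        (fun m hm => by rw [ite_self]; exact hC m (by omega))
      have h2 := Qpoly_eval_node (Finset.univ.filter (fun i : Fin n => p ≤ i.1))
        (Finset.univ.filter (fun i : Fin n => p ≤ i.1))
        (fun j => φ (z6 n q j)) (fun j => Lf φ c (z6 n q j)) (le_refl _) hi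
      rw [hQS] at h2
      have h1 : Lf φ c (z6 n q i)
          * ∏ j ∈ (Finset.univ.filter (fun i : Fin n => p ≤ i.1)).erase i,
              (φ (z6 n q i) - φ (z6 n q j)) = 0 := by
        have := h2.symm
        simpa using this
      rcases mul_eq_zero.1 h1 with h' | h'
      · exact h'
      · exfalso
        have hne : (∏ j ∈ (Finset.univ.filter (fun i : Fin n => p ≤ i.1)).erase i,
            (φ (z6 n q i) - φ (z6 n q j))) ≠ 0 :=
          Finset.prod_ne_zero_iff.2
            (fun j hj => hZne i j (Ne.symm (Finset.mem_erase.1 hj).1))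
        exact hne h'
    have cardU : (Finset.univ : Finset (Fin n)).card = n := by
      rw [Finset.card_univ, Fintype.card_fin]
    have hUne : (Finset.univ : Finset (Fin n)).Nonempty := ⟨⟨0, by omega⟩, Finset.mem_univ _⟩
    have hTsub : Finset.univ.filter (fun i : Fin n => i.1 < p) ⊆ (Finset.univ : Finset (Fin n)) :=
      Finset.filter_subset _ _
    have hsplit : ∀ F : Fin n → K,
        (∑ i ∈ Finset.univ.filter (fun i : Fin n => i.1 < p), F i)
          + (∑ i ∈ Finset.univ.filter (fun i : Fin n => p ≤ i.1), F i) = ∑ i : Fin n, F i := by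
      intro F
      have h := Finset.sum_filter_add_sum_filter_not Finset.univ (fun i : Fin n => i.1 < p) F
      have h2 : Finset.univ.filter (fun i : Fin n => ¬ i.1 < p)
          = Finset.univ.filter (fun i : Fin n => p ≤ i.1) := by
        apply Finset.filter_congr; intro i _; simp [not_lt]
      rw [h2] at h
      exact h
    have hsplit0 : ∀ F : Fin n → K,
        (∀ i ∈ Finset.univ.filter (fun i : Fin n => p ≤ i.1), F i = 0) →
        (∑ i ∈ Finset.univ.filter (fun i : Fin n => i.1 < p), F i) = ∑ i : Fin n, F i := by
      intro F hF
      rw [← hsplit F, Finset.sum_eq_zero hF, add_zero]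
    have hhyp : ∀ m : ℕ, m < (Finset.univ : Finset (Fin n)).card →
        (∑ i ∈ Finset.univ.filter (fun i : Fin n => i.1 < p),
          esymOn (Finset.univ.erase i) m (fun j => φ (z6 n q j)) * Lf φ c (z6 n q i))
        = if m = (Finset.univ : Finset (Fin n)).card - 1 then
            Lf φ c (∏ i : Fin n, X (Sum.inl i)) else 0 := by
      intro m hm
      rw [cardU] at hm
      rw [cardU]
      rw [hsplit0 _ (fun i hi => mul_eq_zero_of_right _ (hS0 i hi))]
      rcases eq_or_ne m (n-1) with rfl | hne
      · rw [if_pos rfl]; exact hB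
      · rw [if_neg hne]; exact hA m (by omega)
    have hQT := Qpoly_eq_C (Finset.univ : Finset (Fin n))
      (Finset.univ.filter (fun i : Fin n => i.1 < p))
      (fun j => φ (z6 n q j)) (fun j => Lf φ c (z6 n q j))
      (Lf φ c (∏ i : Fin n, X (Sum.inl i))) hTsub hUne hhyp
    have εne : ((-1:K)^(n-1)) ≠ 0 := pow_ne_zero _ (by norm_num)
    have ha : ∀ i ∈ Finset.univ.filter (fun i : Fin n => i.1 < p),
        Lf φ c (z6 n q i) * ∏ j ∈ Finset.univ.erase i, (φ (z6 n q i) - φ (z6 n q j))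
          = (-1:K)^(n-1) * Lf φ c (∏ i : Fin n, X (Sum.inl i)) := by
      intro i hi
      have h2 := Qpoly_eval_node (Finset.univ : Finset (Fin n))
        (Finset.univ.filter (fun i : Fin n => i.1 < p))
        (fun j => φ (z6 n q j)) (fun j => Lf φ c (z6 n q j)) hTsub hi
      rw [hQT, Polynomial.eval_C, cardU] at h2
      exact h2.symm
    have hΔne : ∀ i : Fin n,
        (∏ j ∈ Finset.univ.erase i, (φ (z6 n q i) - φ (z6 n q j))) ≠ 0 := by
      intro i
      exact Finset.prod_ne_zero_iff.2
        (fun j hj => hZne i j (Ne.symm (Finset.mem_erase.1 hj).1))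
    have hc0 : ∑ i : Fin n, Lf φ c (z6 n q i) * ∏ j ∈ Finset.univ.erase i, φ (z6 n q j)
        = Lf φ c (∏ i : Fin n, X (Sum.inl i)) := by
      have h2 := congrArg (Polynomial.eval (0:K)) hQT
      rw [Qpoly_eval, Polynomial.eval_C, cardU] at h2
      have h3 : ∀ i : Fin n, ∏ j ∈ Finset.univ.erase i, ((0:K) - φ (z6 n q j))
          = (-1:K)^(n-1) * ∏ j ∈ Finset.univ.erase i, φ (z6 n q j) := by
        intro i
        rw [Finset.prod_congr rfl (fun j (_ : j ∈ Finset.univ.erase i) =>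
          (by ring : (0:K) - φ (z6 n q j) = (-1) * φ (z6 n q j))),
          Finset.prod_mul_distrib, Finset.prod_const,
          Finset.card_erase_of_mem (Finset.mem_univ i), cardU]
      rw [Finset.sum_congr rfl (fun i (_ : i ∈ Finset.univ.filter (fun i : Fin n => i.1 < p)) =>
        by rw [h3 i])] at h2
      have h4 : ((-1:K)^(n-1)) * ∑ i ∈ Finset.univ.filter (fun i : Fin n => i.1 < p),
          Lf φ c (z6 n q i) * ∏ j ∈ Finset.univ.erase i, φ (z6 n q j)
          = ((-1:K)^(n-1)) * Lf φ c (∏ i : Fin n, X (Sum.inl i)) := by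
        rw [Finset.mul_sum]
        rw [← h2]
        exact Finset.sum_congr rfl fun i _ => by ring
      have h5 := mul_left_cancel₀ εne h4
      rw [← h5]
      exact (hsplit0 _ (fun i hi => mul_eq_zero_of_left (hS0 i hi) _)).symm
    have hsq : ∀ (F : Fin n → K), F q = 0 →
        ∑ i : Fin n, F i = ∑ i ∈ Finset.univ.erase q, F i := by
      intro F hF
      rw [← Finset.add_sum_erase Finset.univ F (Finset.mem_univ q), hF, zero_add]
    have hπz : ∀ i : Fin n, ∏ j ∈ Finset.univ.erase i, φ (z6 n q j)
        = (∏ j ∈ Finset.univ.erase i, φ (X (Sum.inl j)))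
          + (if i = q then 0 else φ (X (Sum.inr ()))
              * ∏ j ∈ (Finset.univ.erase q).erase i, φ (X (Sum.inl j))) := by
      intro i
      have h := congrArg φ (prodZ_erase (q := q) trivial i)
      rw [map_prod] at h
      rw [h, map_add, map_prod, apply_ite φ, map_zero, map_mul, map_prod]
    have hcw : ∀ i : Fin n, c (Sum.inl i)
        = Lf φ c (z6 n q i) - (if i = q then c (Sum.inr ()) else 0) :=
      fun i => by rw [hwdef i]; ring
    have hgexp : Lf φ c (∏ i : Fin n, X (Sum.inl i))
        = ∑ i : Fin n, (∏ j ∈ Finset.univ.erase i, φ (X (Sum.inl j))) * c (Sum.inl i) := by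
      rw [Lf_prod]
      exact Finset.sum_congr rfl fun i _ => by rw [map_prod, Lf_X]
    have hs2 : ∑ i : Fin n, (∏ j ∈ Finset.univ.erase i, φ (X (Sum.inl j)))
          * (if i = q then c (Sum.inr ()) else 0)
        = (∏ j ∈ Finset.univ.erase q, φ (X (Sum.inl j))) * c (Sum.inr ()) := by
      rw [Finset.sum_eq_single q]
      · rw [if_pos rfl]
      · intro b _ hbq; rw [if_neg hbq, mul_zero]
      · intro h; exact absurd (Finset.mem_univ q) h
    have e1 : ∑ i : Fin n, Lf φ c (z6 n q i) * ∏ j ∈ Finset.univ.erase i, φ (z6 n q j)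
        = (∑ i : Fin n, Lf φ c (z6 n q i) * ∏ j ∈ Finset.univ.erase i, φ (X (Sum.inl j)))
          + ∑ i ∈ Finset.univ.erase q, Lf φ c (z6 n q i)
              * (φ (X (Sum.inr ())) * ∏ j ∈ (Finset.univ.erase q).erase i, φ (X (Sum.inl j))) := by
      have step : ∀ i : Fin n, Lf φ c (z6 n q i) * ∏ j ∈ Finset.univ.erase i, φ (z6 n q j)
          = Lf φ c (z6 n q i) * ∏ j ∈ Finset.univ.erase i, φ (X (Sum.inl j))
            + (if i = q then 0 else Lf φ c (z6 n q i)
                * (φ (X (Sum.inr ())) * ∏ j ∈ (Finset.univ.erase q).erase i, φ (X (Sum.inl j)))) := by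
        intro i
        rw [hπz i, mul_add]
        congr 1
        rcases eq_or_ne i q with rfl | hiq
        · rw [if_pos rfl, if_pos rfl, mul_zero]
        · rw [if_neg hiq, if_neg hiq]
      rw [Finset.sum_congr rfl (fun i (_ : i ∈ (Finset.univ : Finset (Fin n))) => step i),
        Finset.sum_add_distrib]
      congr 1
      rw [hsq _ (by rw [if_pos rfl])]
      exact Finset.sum_congr rfl fun i hi => by rw [if_neg (Finset.mem_erase.1 hi).1]
    have e2 : Lf φ c (∏ i : Fin n, X (Sum.inl i))
        = (∑ i : Fin n, Lf φ c (z6 n q i) * ∏ j ∈ Finset.univ.erase i, φ (X (Sum.inl j)))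
          - c (Sum.inr ()) * ∏ j ∈ Finset.univ.erase q, φ (X (Sum.inl j)) := by
      rw [hgexp]
      rw [Finset.sum_congr rfl (fun i (_ : i ∈ (Finset.univ : Finset (Fin n))) =>
        (by rw [hcw i]; ring :
          (∏ j ∈ Finset.univ.erase i, φ (X (Sum.inl j))) * c (Sum.inl i)
            = Lf φ c (z6 n q i) * ∏ j ∈ Finset.univ.erase i, φ (X (Sum.inl j))
              - (∏ j ∈ Finset.univ.erase i, φ (X (Sum.inl j)))
                  * (if i = q then c (Sum.inr ()) else 0))),
        Finset.sum_sub_distrib, hs2]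
      ring
    have hdag : (∑ i ∈ Finset.univ.erase q, Lf φ c (z6 n q i)
          * (φ (X (Sum.inr ())) * ∏ j ∈ (Finset.univ.erase q).erase i, φ (X (Sum.inl j))))
        + c (Sum.inr ()) * ∏ j ∈ Finset.univ.erase q, φ (X (Sum.inl j)) = 0 := by
      linear_combination hc0 - e1 + e2
    have hg0 : Lf φ c (∏ i : Fin n, X (Sum.inl i)) = 0 := by
      rcases lt_or_eq_of_le hpn with hplt | hpe
      · have hs₀ : (⟨p, hplt⟩ : Fin n) ∉ Finset.univ.filter (fun i : Fin n => i.1 < p) := by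
          simp
        have h2 := Qpoly_eval_off (Finset.univ : Finset (Fin n))
          (Finset.univ.filter (fun i : Fin n => i.1 < p))
          (fun j => φ (z6 n q j)) (fun j => Lf φ c (z6 n q j)) (Finset.mem_univ _) hs₀
        rw [hQT, Polynomial.eval_C, cardU] at h2
        exact (mul_eq_zero.1 h2).resolve_left εne
      · have hTu : Finset.univ.filter (fun i : Fin n => i.1 < p)
            = (Finset.univ : Finset (Fin n)) := by
          rw [Finset.filter_true_of_mem]; intro i _; rw [hpe]; exact i.2
        have hlt : n - 1 < n := by omega
        have hT'e : Finset.univ.filter (fun i : Fin n => i.1 < p - 1)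
            = Finset.univ.erase (⟨n-1, hlt⟩ : Fin n) := by
          ext i
          simp only [Finset.mem_filter, Finset.mem_erase, Finset.mem_univ, true_and, and_true]
          constructor
          · intro h he
            rw [he] at h
            simp only at h
            omega
          · intro h
            have h2 : i.1 ≠ n - 1 := fun hv => h (Fin.ext hv)
            have := i.2
            omega
        have hκg : Lf φ c (∏ i : Fin n, X (Sum.inl i))
            = φ (∏ i ∈ Finset.univ.filter (fun i : Fin n => i.1 < p - 1), X (Sum.inl i))
                * c (Sum.inl (⟨n-1, hlt⟩ : Fin n)) := by
          have hprod : (∏ i : Fin n, X (Sum.inl i) : MvPolynomial (Fin n ⊕ Unit) ℝ)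
              = X (Sum.inl (⟨n-1, hlt⟩ : Fin n))
                  * ∏ i ∈ Finset.univ.erase (⟨n-1, hlt⟩ : Fin n), X (Sum.inl i) :=
            (Finset.mul_prod_erase Finset.univ _ (Finset.mem_univ _)).symm
          rw [hprod, ← hT'e, Lf_mul, hκ, mul_zero, zero_add, Lf_X]
        rcases eq_or_ne q (⟨n-1, hlt⟩ : Fin n) with hql | hql
        · rw [← hql] at hT'e hκg
          have haU : ∀ i : Fin n, Lf φ c (z6 n q i)
              * ∏ j ∈ Finset.univ.erase i, (φ (z6 n q i) - φ (z6 n q j))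
              = (-1:K)^(n-1) * Lf φ c (∏ i : Fin n, X (Sum.inl i)) :=
            fun i => ha i (by rw [hTu]; exact Finset.mem_univ i)
          have hwall : ∀ i : Fin n, Lf φ c (z6 n q i)
              * ∏ k : Fin n, ∏ j ∈ Finset.univ.erase k, (φ (z6 n q k) - φ (z6 n q j))
              = ((-1:K)^(n-1) * Lf φ c (∏ i : Fin n, X (Sum.inl i)))
                  * ∏ k ∈ Finset.univ.erase i,
                      ∏ j ∈ Finset.univ.erase k, (φ (z6 n q k) - φ (z6 n q j)) := by
            intro i
            rw [← Finset.mul_prod_erase Finset.univ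
              (fun k => ∏ j ∈ Finset.univ.erase k, (φ (z6 n q k) - φ (z6 n q j)))
              (Finset.mem_univ i), ← mul_assoc, haU i]
          have hκX : φ (∏ i ∈ Finset.univ.filter (fun i : Fin n => i.1 < p - 1), X (Sum.inl i))
              = ∏ j ∈ Finset.univ.erase q, φ (X (Sum.inl j)) := by
            rw [hT'e, map_prod]
          have hdag' : (∑ i ∈ Finset.univ.erase q, Lf φ c (z6 n q i)
                * (φ (X (Sum.inr ())) * ∏ j ∈ (Finset.univ.erase q).erase i, φ (X (Sum.inl j))))
              + c (Sum.inr ())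
                * φ (∏ i ∈ Finset.univ.filter (fun i : Fin n => i.1 < p - 1), X (Sum.inl i))
              = 0 := by
            rw [hκX]; exact hdag
          have h1 : c (Sum.inl q) = Lf φ c (z6 n q q) - c (Sum.inr ()) := by
            rw [hcw q, if_pos rfl]
          have hkey : Lf φ c (∏ i : Fin n, X (Sum.inl i))
              = φ (∏ i ∈ Finset.univ.filter (fun i : Fin n => i.1 < p - 1), X (Sum.inl i))
                  * Lf φ c (z6 n q q)
                + ∑ i ∈ Finset.univ.erase q, Lf φ c (z6 n q i)
                    * (φ (X (Sum.inr ()))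
                        * ∏ j ∈ (Finset.univ.erase q).erase i, φ (X (Sum.inl j))) := by
            rw [hκg, h1]
            linear_combination -hdag'
          have hmul : Lf φ c (∏ i : Fin n, X (Sum.inl i))
              * ∏ k : Fin n, ∏ j ∈ Finset.univ.erase k, (φ (z6 n q k) - φ (z6 n q j))
              = ((-1:K)^(n-1) * Lf φ c (∏ i : Fin n, X (Sum.inl i)))
                * (φ (∏ i ∈ Finset.univ.filter (fun i : Fin n => i.1 < p - 1), X (Sum.inl i))
                      * ∏ k ∈ Finset.univ.erase q,
                          ∏ j ∈ Finset.univ.erase k, (φ (z6 n q k) - φ (z6 n q j))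
                    + ∑ i ∈ Finset.univ.erase q,
                        (φ (X (Sum.inr ()))
                            * ∏ j ∈ (Finset.univ.erase q).erase i, φ (X (Sum.inl j)))
                          * ∏ k ∈ Finset.univ.erase i,
                              ∏ j ∈ Finset.univ.erase k, (φ (z6 n q k) - φ (z6 n q j))) := by
            conv_lhs => rw [hkey]
            rw [add_mul, mul_add]
            congr 1
            · calc (φ (∏ i ∈ Finset.univ.filter (fun i : Fin n => i.1 < p - 1), X (Sum.inl i))
                    * Lf φ c (z6 n q q))
                  * ∏ k : Fin n, ∏ j ∈ Finset.univ.erase k, (φ (z6 n q k) - φ (z6 n q j))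
                  = φ (∏ i ∈ Finset.univ.filter (fun i : Fin n => i.1 < p - 1), X (Sum.inl i))
                    * (Lf φ c (z6 n q q)
                      * ∏ k : Fin n, ∏ j ∈ Finset.univ.erase k,
                          (φ (z6 n q k) - φ (z6 n q j))) := by ring
                _ = ((-1:K)^(n-1) * Lf φ c (∏ i : Fin n, X (Sum.inl i)))
                    * (φ (∏ i ∈ Finset.univ.filter (fun i : Fin n => i.1 < p - 1), X (Sum.inl i))
                        * ∏ k ∈ Finset.univ.erase q,
                            ∏ j ∈ Finset.univ.erase k, (φ (z6 n q k) - φ (z6 n q j))) := by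
                    rw [hwall q]; ring
            · rw [Finset.sum_mul, Finset.mul_sum]
              refine Finset.sum_congr rfl fun i hi => ?_
              calc (Lf φ c (z6 n q i)
                    * (φ (X (Sum.inr ()))
                        * ∏ j ∈ (Finset.univ.erase q).erase i, φ (X (Sum.inl j))))
                  * ∏ k : Fin n, ∏ j ∈ Finset.univ.erase k, (φ (z6 n q k) - φ (z6 n q j))
                  = (φ (X (Sum.inr ()))
                      * ∏ j ∈ (Finset.univ.erase q).erase i, φ (X (Sum.inl j)))
                    * (Lf φ c (z6 n q i)
                      * ∏ k : Fin n, ∏ j ∈ Finset.univ.erase k,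
                          (φ (z6 n q k) - φ (z6 n q j))) := by ring
                _ = ((-1:K)^(n-1) * Lf φ c (∏ i : Fin n, X (Sum.inl i)))
                    * ((φ (X (Sum.inr ()))
                          * ∏ j ∈ (Finset.univ.erase q).erase i, φ (X (Sum.inl j)))
                        * ∏ k ∈ Finset.univ.erase i,
                            ∏ j ∈ Finset.univ.erase k, (φ (z6 n q k) - φ (z6 n q j))) := by
                    rw [hwall i]; ring
          have hφR : φ ((∏ k : Fin n, ∏ j ∈ Finset.univ.erase k, (z6 n q k - z6 n q j))
                - (-1 : MvPolynomial (Fin n ⊕ Unit) ℝ)^(n-1)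
                  * ((∏ i ∈ Finset.univ.filter (fun i : Fin n => i.1 < p - 1), X (Sum.inl i))
                        * ∏ k ∈ Finset.univ.erase q,
                            ∏ j ∈ Finset.univ.erase k, (z6 n q k - z6 n q j)
                      + ∑ i ∈ Finset.univ.erase q,
                          (X (Sum.inr ()) * ∏ j ∈ (Finset.univ.erase q).erase i, X (Sum.inl j))
                            * ∏ k ∈ Finset.univ.erase i,
                                ∏ j ∈ Finset.univ.erase k, (z6 n q k - z6 n q j)))
              = (∏ k : Fin n, ∏ j ∈ Finset.univ.erase k, (φ (z6 n q k) - φ (z6 n q j)))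
                - (-1:K)^(n-1)
                  * (φ (∏ i ∈ Finset.univ.filter (fun i : Fin n => i.1 < p - 1), X (Sum.inl i))
                        * ∏ k ∈ Finset.univ.erase q,
                            ∏ j ∈ Finset.univ.erase k, (φ (z6 n q k) - φ (z6 n q j))
                      + ∑ i ∈ Finset.univ.erase q,
                          (φ (X (Sum.inr ()))
                              * ∏ j ∈ (Finset.univ.erase q).erase i, φ (X (Sum.inl j)))
                            * ∏ k ∈ Finset.univ.erase i,
                                ∏ j ∈ Finset.univ.erase k, (φ (z6 n q k) - φ (z6 n q j))) := by
            simp only [map_sub, map_mul, map_pow, map_neg, map_one, map_add, map_sum, map_prod]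
          have hgR : Lf φ c (∏ i : Fin n, X (Sum.inl i))
              * φ ((∏ k : Fin n, ∏ j ∈ Finset.univ.erase k, (z6 n q k - z6 n q j))
                - (-1 : MvPolynomial (Fin n ⊕ Unit) ℝ)^(n-1)
                  * ((∏ i ∈ Finset.univ.filter (fun i : Fin n => i.1 < p - 1), X (Sum.inl i))
                        * ∏ k ∈ Finset.univ.erase q,
                            ∏ j ∈ Finset.univ.erase k, (z6 n q k - z6 n q j)
                      + ∑ i ∈ Finset.univ.erase q,
                          (X (Sum.inr ()) * ∏ j ∈ (Finset.univ.erase q).erase i, X (Sum.inl j))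
                            * ∏ k ∈ Finset.univ.erase i,
                                ∏ j ∈ Finset.univ.erase k, (z6 n q k - z6 n q j))) = 0 := by
            rw [hφR]
            linear_combination hmul
          have hRne : ((∏ k : Fin n, ∏ j ∈ Finset.univ.erase k, (z6 n q k - z6 n q j))
                - (-1 : MvPolynomial (Fin n ⊕ Unit) ℝ)^(n-1)
                  * ((∏ i ∈ Finset.univ.filter (fun i : Fin n => i.1 < p - 1), X (Sum.inl i))
                        * ∏ k ∈ Finset.univ.erase q,
                            ∏ j ∈ Finset.univ.erase k, (z6 n q k - z6 n q j)
                      + ∑ i ∈ Finset.univ.erase q,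
                          (X (Sum.inr ()) * ∏ j ∈ (Finset.univ.erase q).erase i, X (Sum.inl j))
                            * ∏ k ∈ Finset.univ.erase i,
                                ∏ j ∈ Finset.univ.erase k, (z6 n q k - z6 n q j))) ≠ 0 := by
            intro h0
            have hev := congrArg (eval (a₀ n)) h0
            rw [map_zero, map_sub, map_mul, map_add, map_mul] at hev
            have hκev : eval (a₀ n)
                (∏ i ∈ Finset.univ.filter (fun i : Fin n => i.1 < p - 1), X (Sum.inl i)) = 0 := by
              rw [map_prod]
              apply Finset.prod_eq_zero (i := (⟨0, by omega⟩ : Fin n))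
              · simp only [Finset.mem_filter, Finset.mem_univ, true_and]
                show (0:ℕ) < p - 1
                omega
              · rw [eval_a₀_X]; simp
            have hsum0 : eval (a₀ n) (∑ i ∈ Finset.univ.erase q,
                  (X (Sum.inr ()) * ∏ j ∈ (Finset.univ.erase q).erase i, X (Sum.inl j))
                    * ∏ k ∈ Finset.univ.erase i,
                        ∏ j ∈ Finset.univ.erase k, (z6 n q k - z6 n q j)) = 0 := by
              rw [map_sum]
              refine Finset.sum_eq_zero fun i _ => ?_
              rw [map_mul, map_mul]
              have : eval (a₀ n) (X (Sum.inr ()) : MvPolynomial (Fin n ⊕ Unit) ℝ) = 0 := by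
                simp [a₀]
              rw [this, zero_mul, zero_mul]
            rw [hκev, zero_mul, hsum0, add_zero, mul_zero, sub_zero] at hev
            have hPPne : eval (a₀ n)
                (∏ k : Fin n, ∏ j ∈ Finset.univ.erase k, (z6 n q k - z6 n q j)) ≠ 0 := by
              rw [map_prod]
              refine Finset.prod_ne_zero_iff.2 fun k _ => ?_
              rw [map_prod]
              refine Finset.prod_ne_zero_iff.2 fun j hj => ?_
              rw [map_sub, eval_a₀_z6, eval_a₀_z6]
              refine sub_ne_zero_of_ne fun he => ?_
              exact (Finset.mem_erase.1 hj).1 (Fin.ext (by exact_mod_cast he.symm))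
            exact hPPne hev
          have hφRne := (map_ne_zero_iff φ hφinj).2 hRne
          exact (mul_eq_zero.1 hgR).resolve_right hφRne
        · have hclst : c (Sum.inl (⟨n-1, hlt⟩ : Fin n))
              = Lf φ c (z6 n q (⟨n-1, hlt⟩ : Fin n)) := by
            rw [hcw _, if_neg (fun h => hql h.symm), sub_zero]
          have halst := ha (⟨n-1, hlt⟩ : Fin n) (by rw [hTu]; exact Finset.mem_univ _)
          have hfac : Lf φ c (z6 n q (⟨n-1, hlt⟩ : Fin n))
              * (∏ j ∈ Finset.univ.erase (⟨n-1, hlt⟩ : Fin n),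
                    (φ (z6 n q (⟨n-1, hlt⟩ : Fin n)) - φ (z6 n q j))
                  - (-1:K)^(n-1)
                      * φ (∏ i ∈ Finset.univ.filter (fun i : Fin n => i.1 < p - 1),
                          X (Sum.inl i))) = 0 := by
            rw [mul_sub, halst, hκg, hclst]
            ring
          rcases mul_eq_zero.1 hfac with h' | h'
          · rw [hκg, hclst, h', mul_zero]
          · exfalso
            have hpoly : φ (∏ j ∈ Finset.univ.erase (⟨n-1, hlt⟩ : Fin n),
                  (z6 n q (⟨n-1, hlt⟩ : Fin n) - z6 n q j)
                - (-1 : MvPolynomial (Fin n ⊕ Unit) ℝ)^(n-1)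
                    * ∏ i ∈ Finset.univ.filter (fun i : Fin n => i.1 < p - 1), X (Sum.inl i))
                = ∏ j ∈ Finset.univ.erase (⟨n-1, hlt⟩ : Fin n),
                    (φ (z6 n q (⟨n-1, hlt⟩ : Fin n)) - φ (z6 n q j))
                  - (-1:K)^(n-1)
                      * φ (∏ i ∈ Finset.univ.filter (fun i : Fin n => i.1 < p - 1),
                          X (Sum.inl i)) := by
              rw [map_sub, map_mul, map_pow, map_neg, map_one, map_prod]
              congr 1
              exact Finset.prod_congr rfl fun j _ => map_sub φ _ _
            have hnz : (∏ j ∈ Finset.univ.erase (⟨n-1, hlt⟩ : Fin n),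
                  (z6 n q (⟨n-1, hlt⟩ : Fin n) - z6 n q j)
                - (-1 : MvPolynomial (Fin n ⊕ Unit) ℝ)^(n-1)
                    * ∏ i ∈ Finset.univ.filter (fun i : Fin n => i.1 < p - 1), X (Sum.inl i))
                ≠ 0 := by
              intro h0
              have hev := congrArg (eval (a₀ n)) h0
              rw [map_zero, map_sub, map_mul, map_pow, map_neg, map_one, map_prod,
                map_prod] at hev
              have hκ0 : ∏ i ∈ Finset.univ.filter (fun i : Fin n => i.1 < p - 1),
                  eval (a₀ n) (X (Sum.inl i) : MvPolynomial (Fin n ⊕ Unit) ℝ) = 0 := by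
                apply Finset.prod_eq_zero (i := (⟨0, by omega⟩ : Fin n))
                · simp only [Finset.mem_filter, Finset.mem_univ, true_and]
                  omega
                · rw [eval_a₀_X]; simp
              rw [hκ0, mul_zero, sub_zero] at hev
              have hfacne : ∀ j ∈ Finset.univ.erase (⟨n-1, hlt⟩ : Fin n),
                  eval (a₀ n) (z6 n q (⟨n-1, hlt⟩ : Fin n) - z6 n q j) ≠ 0 := by
                intro j hj
                rw [map_sub, eval_a₀_z6, eval_a₀_z6]
                have hjl : j.1 ≠ n - 1 := fun hv => (Finset.mem_erase.1 hj).1 (Fin.ext hv)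
                intro he
                have h3 : ((n-1 : ℕ) : ℝ) = (j.1 : ℝ) := by
                  have : (((⟨n-1, hlt⟩ : Fin n)).1 : ℝ) - (j.1 : ℝ) = 0 := he
                  simp only at this
                  linarith
                exact hjl (by exact_mod_cast h3.symm)
              exact (Finset.prod_ne_zero_iff.2 hfacne) hev
            exact hnz (hφinj (by rw [hpoly, h', map_zero]))
    have hwT : ∀ i ∈ Finset.univ.filter (fun i : Fin n => i.1 < p),
        Lf φ c (z6 n q i) = 0 := by
      intro i hi
      have h2 := ha i hi
      rw [hg0, mul_zero] at h2
      exact (mul_eq_zero.1 h2).resolve_right (hΔne i)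
    have hwall0 : ∀ i : Fin n, Lf φ c (z6 n q i) = 0 := by
      intro i
      rcases lt_or_ge i.1 p with h | h
      · exact hwT i (Finset.mem_filter.2 ⟨Finset.mem_univ _, h⟩)
      · exact hS0 i (Finset.mem_filter.2 ⟨Finset.mem_univ _, h⟩)
    have hd0 : c (Sum.inr ()) = 0 := by
      have h2 := hdag
      rw [Finset.sum_eq_zero
        (fun i (_ : i ∈ Finset.univ.erase q) => by rw [hwall0 i, zero_mul]), zero_add] at h2
      rcases mul_eq_zero.1 h2 with h' | h'
      · exact h'
      · exact absurd h' (Finset.prod_ne_zero_iff.2 fun j _ => hXne j)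
    funext v
    show c v = 0
    rcases v with i | u
    · have h2 := hwdef i
      rw [hwall0 i] at h2
      rcases eq_or_ne i q with rfl | hiq
      · rw [if_pos rfl, hd0, add_zero] at h2; exact h2.symm
      · rw [if_neg hiq, add_zero] at h2; exact h2.symm
    · cases u; exact hd0
  have hr : J.rank = Module.finrank K ↥(LinearMap.range J.mulVecLin) := rfl
  rw [hr, LinearMap.finrank_range_of_inj hinj]
  simp [Module.finrank_pi]
end

section
/- Let n ≥ 2 and let L ⊆ {1, …, n} with |L| ≤ 1. Consider the catenary model's matrix: work in the polynomial ring R over ℝ in the 2(n−1)+|L| variables a_1, …, a_{n−1} (with a_i standing for the rate constant k_{i+1,i}), b_1, …, b_{n−1} (with b_i standing for k_{i,i+1}), and y (the leak rate k_{0q}, present only if L = {q}). Let A be the n×n tridiagonal matrix over R with A_{i+1,i} = a_i and A_{i,i+1} = b_i for 1 ≤ i ≤ n−1, diagonal entries A_{i,i} = −(a_i if i ≤ n−1) − (b_{i−1} if i ≥ 2) − (y if i ∈ L), and all other entries 0. Consider the 2n−1 polynomials consisting of the coefficients of X^m for m = 0, …, n−1 in det(X·I − A) ∈ R[X], together with the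 coefficients of X^m for m = 0, …, n−2 in the determinant of the submatrix of X·I − A obtained by deleting row 1 and column 1. Then the Jacobian matrix of this family with respect to all 2(n−1)+|L| variables, viewed over the fraction field of R, has rank 2(n−1)+|L|. -/
open Finset MvPolynomial

/-- The compartmental matrix of the `n`-compartment catenary model with leak set `L`.
Variables: `Sum.inl (Sum.inl i)` is `a_{i+1}` (the rate `k_{i+2,i+1}`), `Sum.inl (Sum.inr i)`
is `b_{i+1}` (the rate `k_{i+1,i+2}`), and `Sum.inr ⟨q, _⟩` is the leak rate `y` in
compartment `q` (only present for `q ∈ L`).  Entries (1-based): `A_{i+1,i} = aᵢ`,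
`A_{i,i+1} = bᵢ`, `A_{i,i} = -(aᵢ if i ≤ n-1) - (b_{i-1} if i ≥ 2) - (y if i ∈ L)`,
all other entries `0`. -/
noncomputable def A7 (n : ℕ) (L : Finset (Fin n)) :
    Matrix (Fin n) (Fin n)
      (MvPolynomial ((Fin (n - 1) ⊕ Fin (n - 1)) ⊕ {i : Fin n // i ∈ L}) ℝ) :=
  Matrix.of fun i j =>
    if i = j then
      -(if h : i.1 < n - 1 then X (Sum.inl (Sum.inl ⟨i.1, h⟩)) else 0)
        - (if h1 : 1 ≤ i.1 then X (Sum.inl (Sum.inr ⟨i.1 - 1, by have := i.isLt; omega⟩)) else 0)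
        - (if h : i ∈ L then X (Sum.inr ⟨i, h⟩) else 0)
    else if h : i.1 = j.1 + 1 then X (Sum.inl (Sum.inl ⟨j.1, by have := i.isLt; omega⟩))
    else if h : j.1 = i.1 + 1 then X (Sum.inl (Sum.inr ⟨i.1, by have := j.isLt; omega⟩))
    else 0

/-- The `2n - 1` non-monic coefficients of the input-output equation of the catenary model
with input and output in compartment `1`: the coefficients of `X^m`, `m = 0, …, n-1`, in
`det (X•I - A)`, together with the coefficients of `X^m`, `m = 0, …, n-2`, in the determinant
of the submatrix of `X•I - A` obtained by deleting row `1` and column `1`. -/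
noncomputable def coeffs7 (n : ℕ) (L : Finset (Fin n)) (m : Fin (2 * n - 1)) :
    MvPolynomial ((Fin (n - 1) ⊕ Fin (n - 1)) ⊕ {i : Fin n // i ∈ L}) ℝ :=
  if m.1 < n then (Matrix.charmatrix (A7 n L)).det.coeff m.1
  else ((Matrix.charmatrix (A7 n L)).submatrix (delIdx n 0) (delIdx n 0)).det.coeff (m.1 - n)


set_option maxHeartbeats 1000000

open Polynomial Matrix

namespace Cat7



variable {σ : Type*} [Fintype σ] [DecidableEq σ]
set_option linter.unusedSectionVars false

noncomputable abbrev RR (σ : Type*) := MvPolynomial σ ℝ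
noncomputable abbrev KK (σ : Type*) := FractionRing (MvPolynomial σ ℝ)

noncomputable def φ : RR σ →+* KK σ := algebraMap _ _

lemma φ_inj : Function.Injective (φ (σ := σ)) := IsFractionRing.injective _ _

/-- The `λ`-weighted sum of partial derivatives, as a map `R → K`. -/
noncomputable def D (l : σ → KK σ) (f : RR σ) : KK σ :=
  ∑ v : σ, l v * φ (pderiv v f)

lemma D_add (l : σ → KK σ) (f g : RR σ) : D l (f + g) = D l f + D l g := by
  simp [D, mul_add, Finset.sum_add_distrib]

lemma D_zero (l : σ → KK σ) : D l 0 = 0 := by simp [D]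

lemma D_one (l : σ → KK σ) : D l 1 = 0 := by simp [D]

lemma D_C (l : σ → KK σ) (r : ℝ) : D l (C r) = 0 := by simp [D]

lemma D_X (l : σ → KK σ) (v : σ) : D l (X v) = l v := by
  simp [D, pderiv_X, Pi.single_apply]

lemma D_dite (l : σ → KK σ) {c : Prop} [Decidable c] (v : c → σ) :
    D l (if h : c then (X (v h) : RR σ) else 0) = if h : c then l (v h) else 0 := by
  split
  · exact D_X l _
  · exact D_zero l

lemma D_mul (l : σ → KK σ) (f g : RR σ) :
    D l (f * g) = φ f * D l g + φ g * D l f := by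
  simp only [D, pderiv_mul, map_add, _root_.map_mul, Finset.mul_sum]
  rw [← Finset.sum_add_distrib]
  congr 1; ext v; ring

lemma D_neg (l : σ → KK σ) (f : RR σ) : D l (-f) = - D l f := by simp [D]

lemma D_sum (l : σ → KK σ) {ι : Type*} (s : Finset ι) (f : ι → RR σ) :
    D l (∑ i ∈ s, f i) = ∑ i ∈ s, D l (f i) := by
  classical
  induction s using Finset.induction with
  | empty => simp [D_zero]
  | insert _ _ h ih => rw [Finset.sum_insert h, Finset.sum_insert h, D_add, ih]

/-- Coefficient-wise application of `D` to a univariate polynomial. -/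
noncomputable def Dp (l : σ → KK σ) (f : (RR σ)[X]) : (KK σ)[X] :=
  ⟨AddMonoidAlgebra.ofCoeff (Finsupp.mapRange (D l) (D_zero l) f.toFinsupp.coeff)⟩

lemma Dp_coeff (l : σ → KK σ) (f : (RR σ)[X]) (m : ℕ) :
    (Dp l f).coeff m = D l (f.coeff m) := by
  rcases f with ⟨f⟩
  simp [Dp, Polynomial.coeff]

lemma Dp_add (l : σ → KK σ) (f g : (RR σ)[X]) : Dp l (f + g) = Dp l f + Dp l g := by
  ext m; simp [Dp_coeff, D_add]

lemma Dp_mul (l : σ → KK σ) (f g : (RR σ)[X]) :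
    Dp l (f * g) = f.map (φ) * Dp l g + Dp l f * g.map (φ) := by
  ext m
  simp only [Dp_coeff, Polynomial.coeff_mul, Polynomial.coeff_add, D_sum, D_mul,
    Polynomial.coeff_map]
  rw [← Finset.sum_add_distrib]
  refine Finset.sum_congr rfl fun x hx => by ring

lemma Dp_zero_iff (l : σ → KK σ) (f : (RR σ)[X]) :
    Dp l f = 0 ↔ ∀ m, D l (f.coeff m) = 0 := by
  constructor
  · intro h m; rw [← Dp_coeff, h]; simp
  · intro h; ext m; simp [Dp_coeff, h]


lemma D_sub (l : σ → KK σ) (f g : RR σ) : D l (f - g) = D l f - D l g := by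
  simp [sub_eq_add_neg, D_add, D_neg]

lemma Dp_sub (l : σ → KK σ) (f g : (RR σ)[X]) : Dp l (f - g) = Dp l f - Dp l g := by
  ext m; simp [Dp_coeff, Polynomial.coeff_sub, D_sub]

lemma Dp_C (l : σ → KK σ) (c : RR σ) :
    Dp l (Polynomial.C c) = Polynomial.C (D l c) := by
  ext m
  simp only [Dp_coeff, Polynomial.coeff_C]
  split <;> simp [D_zero]

lemma Dp_X_add_C (l : σ → KK σ) (c : RR σ) :
    Dp l (Polynomial.X + Polynomial.C c) = Polynomial.C (D l c) := by
  rw [Dp_add, Dp_C]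
  have : Dp l Polynomial.X = 0 := by
    ext m
    simp only [Dp_coeff, Polynomial.coeff_X, Polynomial.coeff_zero]
    split <;> simp [D_zero, D_one]
  rw [this, zero_add]



lemma succAbove_one_zero {m : ℕ} : ((1 : Fin (m+2)).succAbove 0) = 0 := by
  simp [Fin.succAbove, Fin.lt_def]

lemma succAbove_one_succ {m : ℕ} (j : Fin m) :
    ((1 : Fin (m+2)).succAbove j.succ) = j.succ.succ := by
  rw [Fin.succAbove_of_le_castSucc]
  simp [Fin.le_def, Fin.val_succ]

/-- Two-step Laplace expansion for a matrix whose first row and first column are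
supported on the first two entries. -/
lemma tridiag_step {S : Type*} [CommRing S] {m : ℕ} (M : Matrix (Fin (m+2)) (Fin (m+2)) S)
    (hrow : ∀ j : Fin (m+2), 2 ≤ j.1 → M 0 j = 0)
    (hcol : ∀ i : Fin (m+2), 2 ≤ i.1 → M i 0 = 0) :
    M.det = M 0 0 * (M.submatrix Fin.succ Fin.succ).det
      - M 0 1 * M 1 0 * (M.submatrix (Fin.succ ∘ Fin.succ) (Fin.succ ∘ Fin.succ)).det := by
  have hN : (M.submatrix Fin.succ (Fin.succAbove 1)).det
      = M 1 0 * (M.submatrix (Fin.succ ∘ Fin.succ) (Fin.succ ∘ Fin.succ)).det := by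
    rcases m with _ | m'
    · rw [Matrix.det_fin_one, Matrix.det_fin_zero, mul_one]
      simp [Matrix.submatrix_apply, succAbove_one_zero]
    · rw [Matrix.det_succ_column_zero, Fin.sum_univ_succ]
      have hz2 : ∀ i : Fin (m'+1),
          (M.submatrix Fin.succ (Fin.succAbove 1)) i.succ 0 = 0 := by
        intro i
        simp only [Matrix.submatrix_apply, succAbove_one_zero]
        exact hcol _ (by simp only [Fin.val_succ]; omega)
      simp only [hz2, mul_zero, zero_mul, Finset.sum_const_zero, add_zero,
        Matrix.submatrix_apply, succAbove_one_zero, Fin.val_zero, pow_zero, one_mul,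
        Matrix.submatrix_submatrix]
      have hc : (Fin.succAbove (1 : Fin (m'+3)) ∘ Fin.succ : Fin (m'+1) → Fin (m'+3))
          = Fin.succ ∘ Fin.succ := by
        funext j; exact succAbove_one_succ j
      have hr : (Fin.succ ∘ Fin.succAbove (0 : Fin (m'+2)) : Fin (m'+1) → Fin (m'+3))
          = Fin.succ ∘ Fin.succ := by
        funext j; simp [Function.comp, Fin.zero_succAbove]
      rw [hc, hr, Fin.succ_zero_eq_one]
  rw [Matrix.det_succ_row_zero, Fin.sum_univ_succ, Fin.sum_univ_succ]
  have hz : ∀ j : Fin m, M 0 j.succ.succ = 0 := by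
    intro j
    exact hrow _ (by simp [Fin.val_succ])
  simp only [hz, mul_zero, zero_mul, Finset.sum_const_zero, add_zero, Fin.zero_succAbove,
    Fin.succ_zero_eq_one, Fin.val_zero, Fin.val_one, pow_zero, pow_one, one_mul, neg_one_mul,
    Fin.succAbove_zero]
  rw [hN]
  ring


lemma charmatrix_submatrix' {S m n : Type*} [CommRing S] [DecidableEq m] [DecidableEq n]
    [Fintype m] [Fintype n] (M : Matrix n n S) (f : m → n) (hf : Function.Injective f) :
    Matrix.charmatrix (M.submatrix f f) = (Matrix.charmatrix M).submatrix f f := by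
  apply Matrix.ext; intro i j
  by_cases h : i = j
  · subst h; simp [Matrix.charmatrix_apply_eq]
  · rw [Matrix.submatrix_apply, Matrix.charmatrix_apply_ne _ _ _ (fun hc => h (hf hc)),
      Matrix.charmatrix_apply_ne _ _ _ h, Matrix.submatrix_apply]

section

variable (n : ℕ) (L : Finset (Fin n))

abbrev σn := (Fin (n - 1) ⊕ Fin (n - 1)) ⊕ {i : Fin n // i ∈ L}

def ee (k : ℕ) (i : Fin (n - k)) : Fin n := ⟨i.1 + k, by have := i.isLt; omega⟩

lemma ee_inj (k : ℕ) : Function.Injective (ee n k) := by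
  intro i j h
  have : i.1 + k = j.1 + k := congrArg Fin.val h
  exact Fin.ext (by omega)

noncomputable def Mk (k : ℕ) :
    Matrix (Fin (n - k)) (Fin (n - k)) (MvPolynomial (σn n L) ℝ)[X] :=
  Matrix.charmatrix ((A7 n L).submatrix (ee n k) (ee n k))

lemma Mk_apply (k : ℕ) (i j : Fin (n - k)) :
    Mk n L k i j = Matrix.charmatrix (A7 n L) (ee n k i) (ee n k j) := by
  rw [Mk, charmatrix_submatrix' _ _ (ee_inj n k), Matrix.submatrix_apply]

/-- diagonal entries, as a positive sum -/
noncomputable def dd (i : Fin n) : MvPolynomial (σn n L) ℝ :=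
  (if h : i.1 < n - 1 then X (Sum.inl (Sum.inl ⟨i.1, h⟩)) else 0)
    + (if h1 : 1 ≤ i.1 then X (Sum.inl (Sum.inr ⟨i.1 - 1, by have := i.isLt; omega⟩)) else 0)
    + (if h : i ∈ L then X (Sum.inr ⟨i, h⟩) else 0)

noncomputable def aP (k : ℕ) : MvPolynomial (σn n L) ℝ :=
  if h : k < n - 1 then X (Sum.inl (Sum.inl ⟨k, h⟩)) else 0

noncomputable def bP (k : ℕ) : MvPolynomial (σn n L) ℝ :=
  if h : k < n - 1 then X (Sum.inl (Sum.inr ⟨k, h⟩)) else 0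

lemma A7_diag (i : Fin n) : A7 n L i i = - dd n L i := by
  simp only [A7, dd, Matrix.of_apply, eq_self_iff_true, if_true]
  ring

lemma A7_below {i j : Fin n} (h : i.1 = j.1 + 1) : A7 n L i j = aP n L j.1 := by
  have hij : i ≠ j := fun hc => by simp [hc] at h
  have hj : j.1 < n - 1 := by have := i.isLt; omega
  simp only [A7, Matrix.of_apply, if_neg hij, dif_pos h, aP, dif_pos hj]

lemma A7_above {i j : Fin n} (h : j.1 = i.1 + 1) : A7 n L i j = bP n L i.1 := by
  have hij : i ≠ j := fun hc => by simp [hc] at h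
  have h2 : ¬ i.1 = j.1 + 1 := by omega
  have hi : i.1 < n - 1 := by have := j.isLt; omega
  simp only [A7, Matrix.of_apply, if_neg hij, dif_neg h2, dif_pos h, bP, dif_pos hi]

lemma A7_far {i j : Fin n} (h1 : i.1 ≠ j.1) (h2 : i.1 ≠ j.1 + 1) (h3 : j.1 ≠ i.1 + 1) :
    A7 n L i j = 0 := by
  have hij : i ≠ j := fun hc => by simp [hc] at h1
  simp only [A7, Matrix.of_apply, if_neg hij, dif_neg h2, dif_neg h3]

lemma charm_diag (i : Fin n) :
    Matrix.charmatrix (A7 n L) i i = Polynomial.X + Polynomial.C (dd n L i) := by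
  rw [Matrix.charmatrix_apply_eq, A7_diag, map_neg, sub_neg_eq_add]

lemma charm_below {i j : Fin n} (h : i.1 = j.1 + 1) :
    Matrix.charmatrix (A7 n L) i j = - Polynomial.C (aP n L j.1) := by
  rw [Matrix.charmatrix_apply_ne _ _ _ (fun hc => by simp [hc] at h), A7_below _ _ h]

lemma charm_above {i j : Fin n} (h : j.1 = i.1 + 1) :
    Matrix.charmatrix (A7 n L) i j = - Polynomial.C (bP n L i.1) := by
  have : i ≠ j := fun hc => by simp [hc] at h
  rw [Matrix.charmatrix_apply_ne _ _ _ this, A7_above _ _ h]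

lemma charm_far {i j : Fin n} (h1 : i.1 ≠ j.1) (h2 : i.1 ≠ j.1 + 1) (h3 : j.1 ≠ i.1 + 1) :
    Matrix.charmatrix (A7 n L) i j = 0 := by
  rw [Matrix.charmatrix_apply_ne _ _ _ (fun hc => by simp [hc] at h1),
    A7_far _ _ h1 h2 h3, map_zero, neg_zero]

lemma Mk_det_monic (k : ℕ) : (Mk n L k).det.Monic :=
  Matrix.charpoly_monic _

lemma Mk_det_natDegree (k : ℕ) : (Mk n L k).det.natDegree = n - k := by
  have := Matrix.charpoly_natDegree_eq_dim ((A7 n L).submatrix (ee n k) (ee n k))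
  simpa [Matrix.charpoly, Mk] using this

lemma rec7 (k : ℕ) (hk : k + 2 ≤ n) :
    (Mk n L k).det
      = (Polynomial.X + Polynomial.C (dd n L ⟨k, by omega⟩)) * (Mk n L (k+1)).det
        - Polynomial.C (aP n L k * bP n L k) * (Mk n L (k+2)).det := by
  obtain ⟨m, hm⟩ : ∃ m, n - k = m + 2 := ⟨n - k - 2, by omega⟩
  have hm1 : n - (k+1) = m + 1 := by omega
  have hm2 : n - (k+2) = m := by omega
  set N : Matrix (Fin (m+2)) (Fin (m+2)) _ :=
    (Mk n L k).submatrix (fun i => finCongr hm.symm i) (fun j => finCongr hm.symm j) with hN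
  have hdetN : N.det = (Mk n L k).det := by
    rw [hN]
    exact Matrix.det_submatrix_equiv_self (finCongr hm.symm) _
  have hNapp : ∀ i j : Fin (m+2),
      N i j = Matrix.charmatrix (A7 n L) ⟨i.1 + k, by omega⟩ ⟨j.1 + k, by omega⟩ := by
    intro i j
    rw [hN, Matrix.submatrix_apply, Mk_apply]
    rfl
  have hrow : ∀ j : Fin (m+2), 2 ≤ j.1 → N 0 j = 0 := by
    intro j hj
    rw [hNapp]
    exact charm_far n L (by simp only [Fin.val_zero]; omega) (by simp; omega) (by simp; omega)
  have hcol : ∀ i : Fin (m+2), 2 ≤ i.1 → N i 0 = 0 := by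
    intro i hi
    rw [hNapp]
    exact charm_far n L (by simp only [Fin.val_zero]; omega) (by simp; omega) (by simp; omega)
  have hstep := tridiag_step N hrow hcol
  have h00 : N 0 0 = Polynomial.X + Polynomial.C (dd n L ⟨k, by omega⟩) := by
    rw [hNapp]
    convert charm_diag n L ⟨k, by omega⟩ using 2 <;> exact Fin.ext (by simp)
  have h01 : N 0 1 = - Polynomial.C (bP n L k) := by
    rw [hNapp]
    have := charm_above n L (i := (⟨0 + k, by omega⟩ : Fin n)) (j := ⟨1 + k, by omega⟩) (by simp; omega)
    simpa using this
  have h10 : N 1 0 = - Polynomial.C (aP n L k) := by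
    rw [hNapp]
    have := charm_below n L (i := (⟨1 + k, by omega⟩ : Fin n)) (j := ⟨0 + k, by omega⟩) (by simp; omega)
    simpa using this
  have hsub1 : (N.submatrix Fin.succ Fin.succ).det = (Mk n L (k+1)).det := by
    have : N.submatrix Fin.succ Fin.succ
        = (Mk n L (k+1)).submatrix (fun i => finCongr hm1.symm i) (fun j => finCongr hm1.symm j) := by
      apply Matrix.ext; intro i j
      rw [Matrix.submatrix_apply, hNapp, Matrix.submatrix_apply, Mk_apply]
      congr 1 <;> exact Fin.ext (by simp [ee, Fin.val_succ]; omega)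
    rw [this]
    exact Matrix.det_submatrix_equiv_self (finCongr hm1.symm) _
  have hsub2 : (N.submatrix (Fin.succ ∘ Fin.succ) (Fin.succ ∘ Fin.succ)).det
      = (Mk n L (k+2)).det := by
    have : N.submatrix (Fin.succ ∘ Fin.succ) (Fin.succ ∘ Fin.succ)
        = (Mk n L (k+2)).submatrix (fun i => finCongr hm2.symm i) (fun j => finCongr hm2.symm j) := by
      apply Matrix.ext; intro i j
      rw [Matrix.submatrix_apply, Function.comp, Function.comp, hNapp,
        Matrix.submatrix_apply, Mk_apply]
      congr 1 <;> exact Fin.ext (by simp [ee, Fin.val_succ]; omega)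
    rw [this]
    exact Matrix.det_submatrix_equiv_self (finCongr hm2.symm) _
  rw [← hdetN, hstep, h00, h01, h10, hsub1, hsub2, _root_.map_mul]
  ring


lemma Mk_zero : (Mk n L 0).det = (Matrix.charmatrix (A7 n L)).det := rfl

lemma Mk_one :
    ((Matrix.charmatrix (A7 n L)).submatrix (delIdx n 0) (delIdx n 0)).det
      = (Mk n L 1).det := by
  have hd : delIdx n 0 = ee n 1 := by
    funext k; simp [delIdx, ee]
  rw [hd, ← charmatrix_submatrix' _ _ (ee_inj n 1)]
  rfl

lemma Mk_last (hn : 1 ≤ n) :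
    (Mk n L (n-1)).det = Polynomial.X + Polynomial.C (dd n L ⟨n-1, by omega⟩) := by
  have hm : n - (n-1) = 0 + 1 := by omega
  have h1 : (Mk n L (n-1)).det
      = ((Mk n L (n-1)).submatrix (fun i => finCongr hm.symm i) (fun j => finCongr hm.symm j)).det :=
    (Matrix.det_submatrix_equiv_self (finCongr hm.symm) _).symm
  rw [h1, Matrix.det_fin_one, Matrix.submatrix_apply, Mk_apply]
  have he : ee n (n-1) (finCongr hm.symm 0) = ⟨n-1, by omega⟩ := by
    apply Fin.ext
    simp [ee]
  rw [he]
  exact charm_diag n L _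

variable {n L} in
lemma key (l : σn n L → KK (σn n L)) (k : ℕ) (hk : k + 2 ≤ n)
    (h0 : Dp l (Mk n L k).det = 0) (h1 : Dp l (Mk n L (k+1)).det = 0) :
    D l (dd n L ⟨k, by omega⟩) = 0 ∧ D l (aP n L k * bP n L k) = 0 ∧
      Dp l (Mk n L (k+2)).det = 0 := by
  have hrec := rec7 n L k hk
  have hE : (0 : (KK (σn n L))[X])
      = Polynomial.C (D l (dd n L ⟨k, by omega⟩)) * ((Mk n L (k+1)).det.map (φ))
        - (Polynomial.C (φ (aP n L k * bP n L k)) * Dp l (Mk n L (k+2)).det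
            + Polynomial.C (D l (aP n L k * bP n L k)) * ((Mk n L (k+2)).det.map (φ))) := by
    have := congrArg (Dp l) hrec
    rw [h0, Dp_sub, Dp_mul, Dp_mul, h1, Dp_X_add_C, Dp_C, Polynomial.map_C] at this
    rw [this]
    ring
  have hmon1 : (Mk n L (k+1)).det.coeff (n - (k+1)) = 1 := by
    have h := (Mk_det_monic n L (k+1)).coeff_natDegree
    rwa [Mk_det_natDegree] at h
  have hmon2 : (Mk n L (k+2)).det.coeff (n - (k+2)) = 1 := by
    have h := (Mk_det_monic n L (k+2)).coeff_natDegree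
    rwa [Mk_det_natDegree] at h
  have hlt : (Mk n L (k+2)).det.coeff (n - (k+1)) = 0 := by
    apply Polynomial.coeff_eq_zero_of_natDegree_lt
    rw [Mk_det_natDegree]; omega
  -- coefficient at n - (k+1)
  have e1 := congrArg (fun q => Polynomial.coeff q (n - (k+1))) hE
  simp only [Polynomial.coeff_zero, Polynomial.coeff_sub, Polynomial.coeff_add,
    Polynomial.coeff_C_mul, Polynomial.coeff_map, Dp_coeff, hmon1, hlt, _root_.map_one,
    map_zero, mul_one, mul_zero, D_zero, add_zero] at e1
  have hDd : D l (dd n L ⟨k, by omega⟩) = 0 := by linear_combination -e1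
  -- coefficient at n - (k+2)
  have e2 := congrArg (fun q => Polynomial.coeff q (n - (k+2))) hE
  simp only [Polynomial.coeff_zero, Polynomial.coeff_sub, Polynomial.coeff_add,
    Polynomial.coeff_C_mul, Polynomial.coeff_map, Dp_coeff, hmon2, _root_.map_one, mul_one,
    hDd, zero_mul, D_one, mul_zero, zero_sub, neg_eq_zero] at e2
  have hDp : D l (aP n L k * bP n L k) = 0 := by linear_combination e2
  refine ⟨hDd, hDp, ?_⟩
  rw [hDd, hDp] at hE
  simp only [map_zero, Polynomial.C_0, zero_mul, zero_sub, add_zero, neg_eq_zero,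
    zero_add] at hE
  have hp : (aP n L k * bP n L k) ≠ 0 := by
    have hk1 : k < n - 1 := by omega
    have ha : aP n L k ≠ 0 := by rw [aP, dif_pos hk1]; exact MvPolynomial.X_ne_zero _
    have hb : bP n L k ≠ 0 := by rw [bP, dif_pos hk1]; exact MvPolynomial.X_ne_zero _
    exact mul_ne_zero ha hb
  have hφp : φ (aP n L k * bP n L k) ≠ 0 := fun h => hp (φ_inj (by simpa using h))
  have hE' : Polynomial.C (φ (aP n L k * bP n L k)) * Dp l (Mk n L (k+2)).det = 0 := by
    linear_combination hE
  rcases mul_eq_zero.mp hE' with h | h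
  · exact absurd (Polynomial.C_eq_zero.mp h) hφp
  · exact h


lemma phiX_ne (v : σn n L) : (φ (X v : MvPolynomial (σn n L) ℝ)) ≠ 0 :=
  fun h => MvPolynomial.X_ne_zero v (φ_inj (by simpa using h))

variable {n L} in
lemma chase0 (l : σn n L → KK (σn n L))
    (E1 : ∀ (i : ℕ) (hi : i < n),
      (if h : i < n - 1 then l (Sum.inl (Sum.inl ⟨i, h⟩)) else 0)
        + (if h : 1 ≤ i then l (Sum.inl (Sum.inr ⟨i - 1, by omega⟩)) else 0) = 0)
    (E2 : ∀ (k : ℕ) (hk : k < n - 1),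
      φ (X (Sum.inl (Sum.inl ⟨k, hk⟩)) : MvPolynomial (σn n L) ℝ)
          * l (Sum.inl (Sum.inr ⟨k, hk⟩))
        + φ (X (Sum.inl (Sum.inr ⟨k, hk⟩)) : MvPolynomial (σn n L) ℝ)
          * l (Sum.inl (Sum.inl ⟨k, hk⟩)) = 0) :
    ∀ (k : ℕ) (hk : k < n - 1),
      l (Sum.inl (Sum.inl ⟨k, hk⟩)) = 0 ∧ l (Sum.inl (Sum.inr ⟨k, hk⟩)) = 0 := by
  intro k
  induction k with
  | zero =>
    intro hk
    have h1 := E1 0 (by omega)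
    rw [dif_pos hk, dif_neg (by omega)] at h1
    have hA : l (Sum.inl (Sum.inl ⟨0, hk⟩)) = 0 := by linear_combination h1
    have h2 := E2 0 hk
    rw [hA, mul_zero, add_zero] at h2
    rcases mul_eq_zero.mp h2 with h | h
    · exact absurd h (phiX_ne n L _)
    · exact ⟨hA, h⟩
  | succ k ih =>
    intro hk
    obtain ⟨-, hB⟩ := ih (by omega)
    have h1 := E1 (k+1) (by omega)
    rw [dif_pos hk, dif_pos (by omega : 1 ≤ k + 1)] at h1
    simp only [Nat.add_sub_cancel] at h1
    have hA : l (Sum.inl (Sum.inl ⟨k+1, hk⟩)) = 0 := by linear_combination h1 - hB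
    have h2 := E2 (k+1) hk
    rw [hA, mul_zero, add_zero] at h2
    rcases mul_eq_zero.mp h2 with h | h
    · exact absurd h (phiX_ne n L _)
    · exact ⟨hA, h⟩

variable {n L} in
lemma chase (hn : 2 ≤ n) (hL : L.card ≤ 1) (l : σn n L → KK (σn n L))
    (hdd : ∀ (i : ℕ) (hi : i < n), D l (dd n L ⟨i, hi⟩) = 0)
    (hab : ∀ (k : ℕ) (hk : k < n - 1), D l (aP n L k * bP n L k) = 0) :
    l = 0 := by
  have E1 : ∀ (i : ℕ) (hi : i < n),
      (if h : i < n - 1 then l (Sum.inl (Sum.inl ⟨i, h⟩)) else 0)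
        + (if h : 1 ≤ i then l (Sum.inl (Sum.inr ⟨i - 1, by omega⟩)) else 0)
        + (if h : (⟨i, hi⟩ : Fin n) ∈ L then l (Sum.inr ⟨⟨i, hi⟩, h⟩) else 0) = 0 := by
    intro i hi
    have h := hdd i hi
    rw [dd, D_add, D_add, D_dite, D_dite, D_dite] at h
    exact h
  have E2 : ∀ (k : ℕ) (hk : k < n - 1),
      φ (X (Sum.inl (Sum.inl ⟨k, hk⟩)) : MvPolynomial (σn n L) ℝ)
          * l (Sum.inl (Sum.inr ⟨k, hk⟩))
        + φ (X (Sum.inl (Sum.inr ⟨k, hk⟩)) : MvPolynomial (σn n L) ℝ)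
          * l (Sum.inl (Sum.inl ⟨k, hk⟩)) = 0 := by
    intro k hk
    have h := hab k hk
    rw [D_mul, aP, bP, dif_pos hk, dif_pos hk, D_X, D_X] at h
    exact h
  by_cases hE : L = ∅
  · have E1' : ∀ (i : ℕ) (hi : i < n),
        (if h : i < n - 1 then l (Sum.inl (Sum.inl ⟨i, h⟩)) else 0)
          + (if h : 1 ≤ i then l (Sum.inl (Sum.inr ⟨i - 1, by omega⟩)) else 0) = 0 := by
      intro i hi
      have h := E1 i hi
      rw [dif_neg (show ¬ (⟨i, hi⟩ : Fin n) ∈ L by simp [hE])] at h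
      linear_combination h
    have main := chase0 l E1' E2
    funext w
    rcases w with (i | i) | w
    · exact (main i.1 i.isLt).1
    · exact (main i.1 i.isLt).2
    · exact absurd w.2 (by simp [hE])
  · obtain ⟨q, hq⟩ : ∃ q, L = {q} :=
      Finset.card_eq_one.mp (le_antisymm hL
        (Finset.card_pos.mpr (Finset.nonempty_iff_ne_empty.mpr hE)))
    have hqm : q ∈ L := by simp [hq]
    set t := l (Sum.inr ⟨q, hqm⟩) with ht
    have hmem : ∀ (i : Fin n) (h : i ∈ L), l (Sum.inr ⟨i, h⟩) = t := by
      intro i h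
      have hiq : i = q := by simpa [hq] using h
      subst hiq
      rfl
    have E1q : ∀ (i : ℕ) (hi : i < n),
        (if h : i < n - 1 then l (Sum.inl (Sum.inl ⟨i, h⟩)) else 0)
          + (if h : 1 ≤ i then l (Sum.inl (Sum.inr ⟨i - 1, by omega⟩)) else 0)
          + (if i = q.1 then t else 0) = 0 := by
      intro i hi
      have h := E1 i hi
      by_cases hc : (⟨i, hi⟩ : Fin n) = q
      · rw [dif_pos (show (⟨i, hi⟩ : Fin n) ∈ L by rw [hq, Finset.mem_singleton]; exact hc),
          hmem] at h
        rw [if_pos (show i = q.1 from congrArg Fin.val hc)]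
        exact h
      · rw [dif_neg (show ¬ (⟨i, hi⟩ : Fin n) ∈ L by
          rw [hq, Finset.mem_singleton]; exact hc)] at h
        rw [if_neg (fun hh => hc (Fin.ext hh))]
        exact h
    have Z : ∀ (k : ℕ) (hk : k < n - 1), k < q.1 →
        l (Sum.inl (Sum.inl ⟨k, hk⟩)) = 0 ∧ l (Sum.inl (Sum.inr ⟨k, hk⟩)) = 0 := by
      intro k
      induction k with
      | zero =>
        intro hk hkq
        have h1 := E1q 0 (by omega)
        rw [dif_pos hk, dif_neg (by omega), if_neg (by omega)] at h1
        have hA : l (Sum.inl (Sum.inl ⟨0, hk⟩)) = 0 := by linear_combination h1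
        have h2 := E2 0 hk
        rw [hA, mul_zero, add_zero] at h2
        rcases mul_eq_zero.mp h2 with h | h
        · exact absurd h (phiX_ne n L _)
        · exact ⟨hA, h⟩
      | succ k ih =>
        intro hk hkq
        obtain ⟨-, hB⟩ := ih (by omega) (by omega)
        have h1 := E1q (k+1) (by omega)
        rw [dif_pos hk, dif_pos (by omega : 1 ≤ k + 1), if_neg (by omega)] at h1
        simp only [Nat.add_sub_cancel] at h1
        have hA : l (Sum.inl (Sum.inl ⟨k+1, hk⟩)) = 0 := by linear_combination h1 - hB
        have h2 := E2 (k+1) hk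
        rw [hA, mul_zero, add_zero] at h2
        rcases mul_eq_zero.mp h2 with h | h
        · exact absurd h (phiX_ne n L _)
        · exact ⟨hA, h⟩
    have P : ∀ (k : ℕ) (hk : k < n - 1), q.1 ≤ k →
        ∃ u v : KK (σn n L), u ≠ 0 ∧ v ≠ 0 ∧
          v * l (Sum.inl (Sum.inr ⟨k, hk⟩)) = u * t := by
      intro k
      induction k with
      | zero =>
        intro hk hqk
        have h1 := E1q 0 (by omega)
        rw [dif_pos hk, dif_neg (by omega), if_pos (by omega)] at h1
        have h2 := E2 0 hk
        refine ⟨φ (X (Sum.inl (Sum.inr ⟨0, hk⟩))), φ (X (Sum.inl (Sum.inl ⟨0, hk⟩))),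
          phiX_ne n L _, phiX_ne n L _, ?_⟩
        linear_combination h2 - φ (X (Sum.inl (Sum.inr ⟨0, hk⟩))
          : MvPolynomial (σn n L) ℝ) * h1
      | succ k ih =>
        intro hk hqk
        have h2 := E2 (k+1) hk
        by_cases hqe : q.1 = k + 1
        · obtain ⟨-, hB⟩ := Z k (by omega) (by omega)
          have h1 := E1q (k+1) (by omega)
          rw [dif_pos hk, dif_pos (by omega : 1 ≤ k + 1), if_pos (by omega)] at h1
          simp only [Nat.add_sub_cancel] at h1
          refine ⟨φ (X (Sum.inl (Sum.inr ⟨k+1, hk⟩))), φ (X (Sum.inl (Sum.inl ⟨k+1, hk⟩))),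
            phiX_ne n L _, phiX_ne n L _, ?_⟩
          linear_combination h2 - φ (X (Sum.inl (Sum.inr ⟨k+1, hk⟩))
            : MvPolynomial (σn n L) ℝ) * (h1 - hB)
        · obtain ⟨u, v, hu, hv, huv⟩ := ih (by omega) (by omega)
          have h1 := E1q (k+1) (by omega)
          rw [dif_pos hk, dif_pos (by omega : 1 ≤ k + 1), if_neg (by omega)] at h1
          simp only [Nat.add_sub_cancel] at h1
          refine ⟨φ (X (Sum.inl (Sum.inr ⟨k+1, hk⟩))) * u,
            v * φ (X (Sum.inl (Sum.inl ⟨k+1, hk⟩))),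
            mul_ne_zero (phiX_ne n L _) hu, mul_ne_zero hv (phiX_ne n L _), ?_⟩
          linear_combination v * h2 + φ (X (Sum.inl (Sum.inr ⟨k+1, hk⟩))
            : MvPolynomial (σn n L) ℝ) * huv - v * (φ (X (Sum.inl (Sum.inr ⟨k+1, hk⟩))
            : MvPolynomial (σn n L) ℝ)) * h1
    have ht0 : t = 0 := by
      have h1 := E1q (n-1) (by omega)
      rw [dif_neg (by omega), dif_pos (by omega : 1 ≤ n - 1)] at h1
      have hsub : n - 1 - 1 = n - 2 := by omega
      simp only [hsub] at h1
      by_cases hqn : q.1 = n - 1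
      · obtain ⟨-, hB⟩ := Z (n-2) (by omega) (by omega)
        rw [hB, if_pos (by omega)] at h1
        linear_combination h1
      · obtain ⟨u, v, hu, hv, huv⟩ := P (n-2) (by omega) (by omega)
        rw [if_neg (by omega)] at h1
        have hB : l (Sum.inl (Sum.inr ⟨n-2, by omega⟩)) = 0 := by linear_combination h1
        rw [hB, mul_zero] at huv
        rcases mul_eq_zero.mp huv.symm with h | h
        · exact absurd h hu
        · exact h
    have E1' : ∀ (i : ℕ) (hi : i < n),
        (if h : i < n - 1 then l (Sum.inl (Sum.inl ⟨i, h⟩)) else 0)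
          + (if h : 1 ≤ i then l (Sum.inl (Sum.inr ⟨i - 1, by omega⟩)) else 0) = 0 := by
      intro i hi
      have h := E1q i hi
      have hz : (if i = q.1 then t else 0) = 0 := by split <;> simp [ht0]
      rw [hz] at h
      linear_combination h
    have main := chase0 l E1' E2
    funext w
    rcases w with (i | i) | w
    · exact (main i.1 i.isLt).1
    · exact (main i.1 i.isLt).2
    · show l (Sum.inr w) = 0
      rw [← ht0]
      exact hmem w.1 w.2

end
end Cat7

open Cat7

/-- For the catenary model with input and output in compartment `1` and at most one leak,
the Jacobian of the coefficient map with respect to all `2(n-1) + |L|` variables, viewed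
over the field of rational functions, has full rank `2(n-1) + |L|`. -/
theorem stmt7 (n : ℕ) (hn : 2 ≤ n) (L : Finset (Fin n)) (hL : L.card ≤ 1) :
    (Matrix.of fun (m : Fin (2 * n - 1))
        (v : (Fin (n - 1) ⊕ Fin (n - 1)) ⊕ {i : Fin n // i ∈ L}) =>
        algebraMap (MvPolynomial ((Fin (n - 1) ⊕ Fin (n - 1)) ⊕ {i : Fin n // i ∈ L}) ℝ)
          (FractionRing
            (MvPolynomial ((Fin (n - 1) ⊕ Fin (n - 1)) ⊕ {i : Fin n // i ∈ L}) ℝ))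
          (pderiv v (coeffs7 n L m))).rank = 2 * (n - 1) + L.card := by
  classical
  have hinj : Function.Injective (Matrix.of fun (m : Fin (2 * n - 1))
      (v : (Fin (n - 1) ⊕ Fin (n - 1)) ⊕ {i : Fin n // i ∈ L}) =>
      algebraMap (MvPolynomial ((Fin (n - 1) ⊕ Fin (n - 1)) ⊕ {i : Fin n // i ∈ L}) ℝ)
        (FractionRing
          (MvPolynomial ((Fin (n - 1) ⊕ Fin (n - 1)) ⊕ {i : Fin n // i ∈ L}) ℝ))
        (pderiv v (coeffs7 n L m))).mulVecLin := by
    rw [← LinearMap.ker_eq_bot, Submodule.eq_bot_iff]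
    intro v hv
    rw [LinearMap.mem_ker, Matrix.mulVecLin_apply] at hv
    have hrow : ∀ m : Fin (2*n-1), D v (coeffs7 n L m) = 0 := by
      intro m
      have hm : ∑ x, (φ (pderiv x (coeffs7 n L m)) : KK (σn n L)) * v x = 0 := by
        have := congrFun hv m
        simpa [Matrix.mulVec, dotProduct, φ] using this
      rw [D, show (∑ x, v x * φ (pderiv x (coeffs7 n L m)))
          = ∑ x, (φ (pderiv x (coeffs7 n L m)) : KK (σn n L)) * v x from
          Finset.sum_congr rfl fun x _ => mul_comm _ _]
      exact hm
    have hC0 : ∀ m' : ℕ, m' < n → D v ((Mk n L 0).det.coeff m') = 0 := by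
      intro m' h
      have hr : D v (if m' < n then (Matrix.charmatrix (A7 n L)).det.coeff m'
          else ((Matrix.charmatrix (A7 n L)).submatrix (delIdx n 0)
            (delIdx n 0)).det.coeff (m' - n)) = 0 := hrow ⟨m', by omega⟩
      rw [if_pos h] at hr
      rw [Mk_zero]
      exact hr
    have hC1 : ∀ m' : ℕ, m' ≤ n - 2 → D v ((Mk n L 1).det.coeff m') = 0 := by
      intro m' h
      have hr : D v (if m' + n < n then (Matrix.charmatrix (A7 n L)).det.coeff (m' + n)
          else ((Matrix.charmatrix (A7 n L)).submatrix (delIdx n 0)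
            (delIdx n 0)).det.coeff (m' + n - n)) = 0 := hrow ⟨m' + n, by omega⟩
      rw [if_neg (by omega), Nat.add_sub_cancel, Mk_one] at hr
      exact hr
    have hDp0 : Dp v (Mk n L 0).det = 0 := by
      rw [Dp_zero_iff]
      intro j
      rcases lt_trichotomy j n with h | h | h
      · exact hC0 j h
      · have hc : (Mk n L 0).det.coeff n = 1 := by
          have h2 := (Mk_det_monic n L 0).coeff_natDegree
          rwa [Mk_det_natDegree] at h2
        rw [h, hc, D_one]
      · rw [Polynomial.coeff_eq_zero_of_natDegree_lt
          (by rw [Mk_det_natDegree]; omega), D_zero]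
    have hDp1 : Dp v (Mk n L 1).det = 0 := by
      rw [Dp_zero_iff]
      intro j
      rcases lt_trichotomy j (n-1) with h | h | h
      · exact hC1 j (by omega)
      · have hc : (Mk n L 1).det.coeff (n-1) = 1 := by
          have h2 := (Mk_det_monic n L 1).coeff_natDegree
          rwa [Mk_det_natDegree] at h2
        rw [h, hc, D_one]
      · rw [Polynomial.coeff_eq_zero_of_natDegree_lt
          (by rw [Mk_det_natDegree]; omega), D_zero]
    have chain : ∀ k : ℕ, k + 2 ≤ n →
        Dp v (Mk n L k).det = 0 ∧ Dp v (Mk n L (k+1)).det = 0 := by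
      intro k
      induction k with
      | zero => exact fun _ => ⟨hDp0, hDp1⟩
      | succ k ih =>
        intro h
        obtain ⟨u1, u2⟩ := ih (by omega)
        exact ⟨u2, (key v k (by omega) u1 u2).2.2⟩
    have hdd : ∀ (i : ℕ) (hi : i < n), D v (dd n L ⟨i, hi⟩) = 0 := by
      intro i hi
      rcases lt_or_ge i (n-1) with h | h
      · obtain ⟨u1, u2⟩ := chain i (by omega)
        exact (key v i (by omega) u1 u2).1
      · have hieq : i = n - 1 := by omega
        subst hieq
        have hlast := (chain (n-2) (by omega)).2
        have hidx : n - 2 + 1 = n - 1 := by omega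
        rw [hidx, Mk_last n L (by omega), Dp_X_add_C] at hlast
        exact Polynomial.C_eq_zero.mp hlast
    have hab : ∀ (k : ℕ) (hk : k < n - 1), D v (aP n L k * bP n L k) = 0 := by
      intro k hk
      obtain ⟨u1, u2⟩ := chain k (by omega)
      exact (key v k (by omega) u1 u2).2.1
    exact chase hn hL v hdd hab
  rw [Matrix.rank, LinearMap.finrank_range_of_inj hinj, Module.finrank_pi]
  simp only [Fintype.card_sum, Fintype.card_fin, Fintype.card_coe]
  omega
end
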